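/- arXiv:0806.2582 — 2 statements merged into one kernel-verified Lean document; each statement's English description precedes it below -/
import Mathlib

section
/- Assume (A2), and let β := D⁻u(0) be the left derivative of u at 0. Then for every measurable f ≥ 0: E[Φ(f)·1_{{f ≥ β}}] < ∞ if and only if E[Φ(λf)·1_{{f ≥ β}}] < ∞ for every λ > 0. Consequently L^Φ̂(P) = M^Φ̂(P): for every measurable f ≥ 0, E[Φ̂(f)] < ∞ if and only if E[Φ̂(λf)] < ∞ for every λ > 0. -/
open MeasureTheory Filter Set Topology
open scoped ENNReal

noncomputable section

/-- The positive part of an extended real number, as an element of `ℝ≥0∞`. -/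
def EReal.toENN (x : EReal) : ℝ≥0∞ := if x = ⊤ then ⊤ else ENNReal.ofReal x.toReal

lemma myToENN_coe (r : ℝ) : (↑r : EReal).toENN = ENNReal.ofReal r := by
  simp [EReal.toENN]

lemma myToENN_bot : (⊥ : EReal).toENN = 0 := by simp [EReal.toENN]

lemma myToENN_top : (⊤ : EReal).toENN = ⊤ := by simp [EReal.toENN]

lemma myToENN_mono {x y : EReal} (h : x ≤ y) : x.toENN ≤ y.toENN := by
  rcases eq_or_ne y ⊤ with hy | hy
  · simp [hy, myToENN_top]
  rcases eq_or_ne x ⊥ with hx | hx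
  · simp [hx, myToENN_bot]
  have hx' : x ≠ ⊤ := fun hxx => hy (top_le_iff.mp (hxx ▸ h))
  rcases eq_or_ne y ⊥ with hyb | hyb
  · exact absurd (le_bot_iff.mp (hyb ▸ h)) hx
  rw [EReal.toENN, EReal.toENN, if_neg hx', if_neg hy]
  exact ENNReal.ofReal_le_ofReal (EReal.toReal_le_toReal h hx hy)

/-- The support-line inequality for a concave `u` whose left derivative at `0` is `β`. -/
lemma support_line
    (a : EReal) (ha : a < 0) (u : ℝ → EReal)
    (hu_ne_top : ∀ x : ℝ, u x ≠ ⊤)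
    (hu_bot : ∀ x : ℝ, (x : EReal) < a → u x = ⊥)
    (hu_fin : ∀ x : ℝ, a < (x : EReal) → u x ≠ ⊥)
    (hu_mono : Monotone u)
    (hu_conc : ∀ x y t : ℝ, a < (x : EReal) → a < (y : EReal) → 0 ≤ t → t ≤ 1 →
      ((t * (u x).toReal + (1 - t) * (u y).toReal : ℝ) : EReal) ≤ u (t * x + (1 - t) * y))
    (β : ℝ)
    (hβ : HasDerivWithinAt (fun x : ℝ => (u x).toReal) β (Iio 0) 0) :
    0 ≤ β ∧ ∀ x : ℝ, u x ≤ (((u 0).toReal + β * x : ℝ) : EReal) := by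
  set U : ℝ → ℝ := fun x => (u x).toReal with hU
  have ha0 : a < ((0:ℝ) : EReal) := by exact_mod_cast ha
  obtain ⟨a₀, haa₀, ha₀0'⟩ := EReal.exists_between_coe_real ha
  have ha₀0 : a₀ < 0 := by exact_mod_cast ha₀0'
  have hreal : ∀ x : ℝ, a < (x : EReal) → u x = ((U x : ℝ) : EReal) := fun x hx =>
    (EReal.coe_toReal (hu_ne_top x) (hu_fin x hx)).symm
  have hUle : ∀ x y : ℝ, a < (x : EReal) → x ≤ y → U x ≤ U y := fun x y hx hxy =>
    EReal.toReal_le_toReal (hu_mono hxy) (hu_fin x hx) (hu_ne_top y)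
  have hslope : Tendsto (slope U 0) (𝓝[<] (0:ℝ)) (𝓝 β) := by
    have h := hasDerivWithinAt_iff_tendsto_slope.mp hβ
    rwa [Set.diff_singleton_eq_self (by simp)] at h
  -- secant slope monotonicity
  have hsec : ∀ x x' : ℝ, a < (x : EReal) → x ≤ x' → x' < 0 →
      slope U 0 x' ≤ slope U 0 x := by
    intro x x' hax hxx' hx'0
    have hx0 : x < 0 := lt_of_le_of_lt hxx' hx'0
    set t : ℝ := x' / x with htdef
    have ht0 : 0 < t := div_pos_of_neg_of_neg hx'0 hx0
    have ht1 : t ≤ 1 := by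
      rw [div_le_one_iff]
      exact Or.inr (Or.inr ⟨hx0, hxx'⟩)
    have hconc := hu_conc x 0 t hax ha0 ht0.le ht1
    have harg : t * x + (1 - t) * 0 = x' := by
      rw [htdef]; field_simp
      rw [mul_zero, add_zero]; exact mul_div_cancel_right₀ x' hx0.ne
    rw [harg] at hconc
    have hax' : a < (x' : EReal) := lt_of_lt_of_le hax (by exact_mod_cast hxx')
    rw [hreal x' hax'] at hconc
    have h1 : t * U x + (1 - t) * U 0 ≤ U x' := by exact_mod_cast hconc
    rw [slope_def_field, slope_def_field, sub_zero, sub_zero]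
    rw [div_le_iff_of_neg hx'0]
    have e : (U x - U 0) / x * x' = t * U x - t * U 0 := by
      field_simp
      ring
    rw [e]
    linarith
  have hβ0 : 0 ≤ β := by
    refine ge_of_tendsto hslope ?_
    filter_upwards [Ioo_mem_nhdsLT_of_mem (⟨ha₀0, le_refl (0:ℝ)⟩ : (0:ℝ) ∈ Set.Ioc a₀ 0)]
      with x hx
    have hax : a < (x : EReal) := lt_trans haa₀ (by exact_mod_cast hx.1)
    rw [slope_def_field, sub_zero]
    rw [div_nonneg_iff]
    exact Or.inr ⟨sub_nonpos.mpr (hUle x 0 hax hx.2.le), hx.2.le⟩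
  have main : ∀ x : ℝ, a < (x : EReal) → U x ≤ U 0 + β * x := by
    intro x hax
    rcases lt_trichotomy x 0 with hx0 | hx0 | hx0
    · have hβle : β ≤ slope U 0 x := by
        refine le_of_tendsto hslope ?_
        filter_upwards [Ioo_mem_nhdsLT_of_mem (⟨hx0, le_refl (0:ℝ)⟩ : (0:ℝ) ∈ Set.Ioc x 0)]
          with x' hx'
        exact hsec x x' hax hx'.1.le hx'.2
      rw [slope_def_field, sub_zero] at hβle
      have := (le_div_iff_of_neg hx0).mp hβle
      linarith
    · subst hx0; simp
    · -- x > 0 : compare with slopes on the left, pass to the limit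
      have h2 : ∀ᶠ x' in 𝓝[<] (0:ℝ), U x - U 0 ≤ x * slope U 0 x' := by
        filter_upwards [Ioo_mem_nhdsLT_of_mem (⟨ha₀0, le_refl (0:ℝ)⟩ : (0:ℝ) ∈ Set.Ioc a₀ 0)]
          with x' hx'
        have hx'0 : x' < 0 := hx'.2
        have hax' : a < (x' : EReal) := lt_trans haa₀ (by exact_mod_cast hx'.1)
        have hd : 0 < x - x' := by linarith
        set t : ℝ := x / (x - x') with htdef
        have ht0 : 0 < t := div_pos hx0 hd
        have ht1 : t ≤ 1 := le_of_lt ((div_lt_one hd).mpr (by linarith))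
        have hconc := hu_conc x' x t hax' hax ht0.le ht1
        have harg : t * x' + (1 - t) * x = 0 := by
          rw [htdef]; field_simp
          ring
        rw [harg, hreal 0 ha0] at hconc
        have h3 : t * U x' + (1 - t) * U x ≤ U 0 := by exact_mod_cast hconc
        have h3' := mul_le_mul_of_nonneg_left h3 hd.le
        have e2 : (x - x') * (t * U x' + (1 - t) * U x) = x * U x' + (x - x' - x) * U x := by
          rw [htdef]
          field_simp
        rw [e2] at h3'
        rw [slope_def_field, sub_zero, mul_div_assoc', le_div_iff_of_neg hx'0]
        nlinarith [h3']
      have htended : Tendsto (fun x' => x * slope U 0 x') (𝓝[<] (0:ℝ)) (𝓝 (x * β)) :=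
        hslope.const_mul x
      have := ge_of_tendsto htended h2
      linarith
  constructor
  · exact hβ0
  · intro x
    rcases lt_trichotomy (x : EReal) a with h | h | h
    · rw [hu_bot x h]; exact bot_le
    · rcases eq_or_ne (u x) ⊥ with hb | hb
      · rw [hb]; exact bot_le
      have hx0 : x < 0 := by
        have : (x : EReal) < ((0:ℝ) : EReal) := h ▸ ha0
        exact_mod_cast this
      have hxr : u x = ((U x : ℝ) : EReal) := (EReal.coe_toReal (hu_ne_top x) hb).symm
      have hten : Tendsto (fun x' : ℝ => U 0 + β * x') (𝓝[>] x) (𝓝 (U 0 + β * x)) :=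
        ((continuous_const.add (continuous_const.mul continuous_id)).tendsto x).mono_left
          nhdsWithin_le_nhds
      have hev : ∀ᶠ x' in 𝓝[>] x, U x ≤ U 0 + β * x' := by
        filter_upwards [Ioo_mem_nhdsGT_of_mem (⟨le_refl x, hx0⟩ : x ∈ Set.Ico x 0)]
          with x' hx'
        have hax' : a < (x' : EReal) := h ▸ (by exact_mod_cast hx'.1)
        have hUxx' : U x ≤ U x' :=
          EReal.toReal_le_toReal (hu_mono hx'.1.le) hb (hu_ne_top x')
        linarith [main x' hax']
      have := ge_of_tendsto hten hev
      rw [hxr]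
      exact_mod_cast this
    · rw [hreal x h]
      exact_mod_cast main x h

/-- Remark 24.  Assume (A2) and let `β := D⁻u(0)`.  Then for every
measurable `f ≥ 0`: `E[Φ(f)·1_{f ≥ β}] < ∞` iff `E[Φ(λf)·1_{f ≥ β}] < ∞` for every `λ > 0`.
Consequently `L^Φ̂(P) = M^Φ̂(P)`: for every measurable `f ≥ 0`, `E[Φ̂(f)] < ∞` iff
`E[Φ̂(λf)] < ∞` for every `λ > 0`. -/
theorem statement12
    {Ω : Type*} [MeasurableSpace Ω] (P : Measure Ω) [IsProbabilityMeasure P]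
    (a : EReal) (ha : a < 0)
    (u : ℝ → EReal)
    (hu_ne_top : ∀ x : ℝ, u x ≠ ⊤)
    (hu_bot : ∀ x : ℝ, (x : EReal) < a → u x = ⊥)
    (hu_fin : ∀ x : ℝ, a < (x : EReal) → u x ≠ ⊥)
    (hu_mono : Monotone u)
    (hu_conc : ∀ x y t : ℝ, a < (x : EReal) → a < (y : EReal) → 0 ≤ t → t ≤ 1 →
      ((t * (u x).toReal + (1 - t) * (u y).toReal : ℝ) : EReal) ≤ u (t * x + (1 - t) * y))
    (hu_lim : Tendsto u atBot (𝓝 ⊥))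
    -- the convex conjugate `Φ(y) = sup_x (u(x) - x·y)`
    (Phi : ℝ → EReal)
    (hPhi : ∀ y : ℝ, Phi y = ⨆ x : ℝ, (u x - ((x * y : ℝ) : EReal)))
    -- the Young function `û(x) = -u(-|x|) + u(0)` and its conjugate `Φ̂`
    (uhat : ℝ → ℝ≥0∞)
    (huhat : ∀ x : ℝ, uhat x = (u 0 - u (-|x|)).toENN)
    (Phat : ℝ → ℝ≥0∞)
    (hPhat : ∀ y : ℝ, Phat y = ⨆ x : ℝ, (ENNReal.ofReal (x * y) - uhat x))
    -- (A2): `L_Φ = {g ≥ 0 : E[Φ(g)] < ∞}` is a cone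
    (hA2 : ∀ g : Ω → ℝ, Measurable g → (∀ ω, 0 ≤ g ω) →
      ∫⁻ ω, (Phi (g ω)).toENN ∂P < ⊤ →
      ∀ l : ℝ, 0 < l → ∫⁻ ω, (Phi (l * g ω)).toENN ∂P < ⊤)
    -- `β` is the left derivative of `u` at `0`
    (β : ℝ)
    (hβ : HasDerivWithinAt (fun x : ℝ => (u x).toReal) β (Iio 0) 0) :
    (∀ f : Ω → ℝ, Measurable f → (∀ ω, 0 ≤ f ω) →
      ((∫⁻ ω, (if β ≤ f ω then (Phi (f ω)).toENN else 0) ∂P < ⊤) ↔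
        ∀ l : ℝ, 0 < l →
          ∫⁻ ω, (if β ≤ f ω then (Phi (l * f ω)).toENN else 0) ∂P < ⊤)) ∧
    (∀ f : Ω → ℝ, Measurable f → (∀ ω, 0 ≤ f ω) →
      ((∫⁻ ω, Phat (f ω) ∂P < ⊤) ↔
        ∀ l : ℝ, 0 < l → ∫⁻ ω, Phat (l * f ω) ∂P < ⊤)) := by
  have ha0 : a < ((0:ℝ) : EReal) := by exact_mod_cast ha
  obtain ⟨hβ0, hL2⟩ := support_line a ha u hu_ne_top hu_bot hu_fin hu_mono hu_conc β hβ
  set c : ℝ := (u 0).toReal with hc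
  have hu0 : u 0 = (c : EReal) := (EReal.coe_toReal (hu_ne_top 0) (hu_fin 0 ha0)).symm
  -- `Φ(y) ≥ u(0)` for every `y`
  have hPhige : ∀ y : ℝ, (c : EReal) ≤ Phi y := by
    intro y
    rw [hPhi]
    have h0 : u 0 - (((0:ℝ) * y : ℝ) : EReal) = (c : EReal) := by
      rw [hu0]; norm_num
    calc (c : EReal) = u 0 - (((0:ℝ) * y : ℝ) : EReal) := h0.symm
    _ ≤ ⨆ x : ℝ, (u x - ((x * y : ℝ) : EReal)) :=
        le_iSup (fun x : ℝ => u x - ((x * y : ℝ) : EReal)) 0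
  -- monotonicity of EReal subtraction in the first argument
  have hsub_mono : ∀ (p q : EReal) (r : ℝ), p ≤ q → p - (r : EReal) ≤ q - (r : EReal) := by
    intro p q r h
    rw [sub_eq_add_neg, sub_eq_add_neg]
    exact add_le_add_left h _
  -- `Φ(β) = u(0)`
  have hPhiβ : Phi β = (c : EReal) := by
    refine le_antisymm ?_ (hPhige β)
    rw [hPhi]
    refine iSup_le fun x => ?_
    calc u x - ((x * β : ℝ) : EReal)
        ≤ ((c + β * x : ℝ) : EReal) - ((x * β : ℝ) : EReal) := hsub_mono _ _ _ (hL2 x)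
    _ = (c : EReal) := by
        rw [← EReal.coe_sub]
        norm_cast
        ring
  -- `Φ̂` is monotone on nonnegative reals
  have hPmono : ∀ y1 y2 : ℝ, 0 ≤ y1 → y1 ≤ y2 → Phat y1 ≤ Phat y2 := by
    intro y1 y2 h0 h12
    rw [hPhat, hPhat]
    refine iSup_le fun x => ?_
    rcases le_or_gt 0 x with hx | hx
    · exact le_trans
        (tsub_le_tsub_right
          (ENNReal.ofReal_le_ofReal (mul_le_mul_of_nonneg_left h12 hx)) _)
        (le_iSup (fun x => ENNReal.ofReal (x * y2) - uhat x) x)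
    · have hz : ENNReal.ofReal (x * y1) = 0 :=
        ENNReal.ofReal_of_nonpos (mul_nonpos_of_nonpos_of_nonneg hx.le h0)
      rw [hz, zero_tsub]
      exact zero_le
  -- Lemma B : `Φ̂(y) ≤ (Φ(y) - u(0))⁺` for `y ≥ 0`
  have hB : ∀ y : ℝ, 0 ≤ y → Phat y ≤ (Phi y - u 0).toENN := by
    intro y hy
    rw [hPhat]
    refine iSup_le fun x => ?_
    rcases eq_or_ne (uhat x) ⊤ with htop | htop
    · rw [htop, ENNReal.sub_top]
      exact zero_le
    · have hne : u (-|x|) ≠ ⊥ := by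
        intro hbot
        apply htop
        rw [huhat, hbot, hu0]
        rw [sub_eq_add_neg]
        simp [myToENN_top]
      set w : ℝ := (u (-|x|)).toReal with hw0
      have hw : u (-|x|) = (w : EReal) := (EReal.coe_toReal (hu_ne_top _) hne).symm
      have huhatx : uhat x = ENNReal.ofReal (c - w) := by
        rw [huhat, hu0, hw, ← EReal.coe_sub, myToENN_coe]
      have h1 : ((w + |x| * y : ℝ) : EReal) ≤ Phi y := by
        rw [hPhi]
        have he : u (-|x|) - (((-|x|) * y : ℝ) : EReal) = ((w + |x| * y : ℝ) : EReal) := by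
          rw [hw, ← EReal.coe_sub]
          norm_cast
          ring
        calc ((w + |x| * y : ℝ) : EReal)
            = u (-|x|) - (((-|x|) * y : ℝ) : EReal) := he.symm
        _ ≤ ⨆ z : ℝ, (u z - ((z * y : ℝ) : EReal)) :=
            le_iSup (fun z : ℝ => u z - ((z * y : ℝ) : EReal)) (-|x|)
      have hPhi_ge : ((w + |x| * y - c : ℝ) : EReal) ≤ Phi y - u 0 := by
        rw [hu0]
        calc ((w + |x| * y - c : ℝ) : EReal)
            = ((w + |x| * y : ℝ) : EReal) - (c : EReal) := by rw [← EReal.coe_sub]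
        _ ≤ Phi y - (c : EReal) := hsub_mono _ _ _ h1
      calc ENNReal.ofReal (x * y) - uhat x
          ≤ ENNReal.ofReal (|x| * y) - uhat x :=
            tsub_le_tsub_right
              (ENNReal.ofReal_le_ofReal (mul_le_mul_of_nonneg_right (le_abs_self x) hy)) _
      _ ≤ ENNReal.ofReal (w + |x| * y - c) := by
            rw [huhatx, tsub_le_iff_right]
            calc ENNReal.ofReal (|x| * y)
                = ENNReal.ofReal ((w + |x| * y - c) + (c - w)) := by congr 1; ring
            _ ≤ _ := ENNReal.ofReal_add_le
      _ ≤ (Phi y - u 0).toENN := by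
            rw [← myToENN_coe]
            exact myToENN_mono hPhi_ge
  -- Lemma C : `(Φ(y) - u(0))⁺ ≤ Φ̂(y)` for `y ≥ β`
  have hC : ∀ y : ℝ, β ≤ y → (Phi y - u 0).toENN ≤ Phat y := by
    intro y hy
    have hy0 : 0 ≤ y := le_trans hβ0 hy
    rcases eq_or_ne (Phat y) ⊤ with hp | hp
    · rw [hp]; exact le_top
    set p : ℝ := (Phat y).toReal with hpdef
    have hp0 : 0 ≤ p := ENNReal.toReal_nonneg
    have hPhile : Phi y ≤ ((c + p : ℝ) : EReal) := by
      rw [hPhi]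
      refine iSup_le fun z => ?_
      rcases le_or_gt z 0 with hz | hz
      · rcases eq_or_ne (u z) ⊥ with hb | hb
        · rw [hb, EReal.bot_sub]
          exact bot_le
        · have hzr : u z = (((u z).toReal : ℝ) : EReal) :=
            (EReal.coe_toReal (hu_ne_top z) hb).symm
          set wz : ℝ := (u z).toReal with hwz0
          have hterm : ENNReal.ofReal ((-z) * y) - uhat (-z) ≤ Phat y := by
            rw [hPhat]
            exact le_iSup (fun x : ℝ => ENNReal.ofReal (x * y) - uhat x) (-z)
          have habs : |(-z)| = -z := abs_of_nonneg (neg_nonneg.mpr hz)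
          have huz : uhat (-z) = ENNReal.ofReal (c - wz) := by
            rw [huhat, habs, neg_neg, hu0, hzr, ← EReal.coe_sub, myToENN_coe]
          have hwzc : wz ≤ c := EReal.toReal_le_toReal (hu_mono hz) hb (hu_ne_top 0)
          rw [huz, tsub_le_iff_right] at hterm
          have hne2 : Phat y + ENNReal.ofReal (c - wz) ≠ ⊤ :=
            ENNReal.add_ne_top.mpr ⟨hp, ENNReal.ofReal_ne_top⟩
          have hterm' : (-z) * y ≤ p + (c - wz) := by
            have h := (ENNReal.ofReal_le_iff_le_toReal hne2).mp hterm
            rwa [ENNReal.toReal_add hp ENNReal.ofReal_ne_top,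
              ENNReal.toReal_ofReal (by linarith)] at h
          rw [hzr, ← EReal.coe_sub]
          exact EReal.coe_le_coe_iff.mpr (by nlinarith)
      · have haz : a < (z : EReal) := lt_trans ha0 (by exact_mod_cast hz)
        calc u z - ((z * y : ℝ) : EReal)
            ≤ ((c + β * z : ℝ) : EReal) - ((z * y : ℝ) : EReal) := hsub_mono _ _ _ (hL2 z)
        _ = ((c + β * z - z * y : ℝ) : EReal) := by rw [← EReal.coe_sub]
        _ ≤ ((c + p : ℝ) : EReal) := EReal.coe_le_coe_iff.mpr (by nlinarith)
    have hfin : Phi y - u 0 ≤ ((p : ℝ) : EReal) := by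
      rw [hu0, sub_eq_add_neg]
      calc Phi y + -(c : EReal)
          ≤ ((c + p : ℝ) : EReal) + -(c : EReal) := add_le_add_left hPhile _
      _ = (p : EReal) := by
          rw [← EReal.coe_neg, ← EReal.coe_add]
          norm_cast
          ring
    calc (Phi y - u 0).toENN ≤ ((p : ℝ) : EReal).toENN := myToENN_mono hfin
    _ = ENNReal.ofReal p := myToENN_coe p
    _ = Phat y := ENNReal.ofReal_toReal hp
  -- bridging inequalities for `toENN`
  have hD : ∀ e : EReal, e.toENN ≤ (e - u 0).toENN + ENNReal.ofReal c := by
    intro e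
    rcases eq_or_ne e ⊤ with rfl | het
    · rw [hu0, EReal.top_sub_coe, myToENN_top]; exact le_top
    rcases eq_or_ne e ⊥ with rfl | heb
    · rw [myToENN_bot]; exact zero_le
    have he : e = ((e.toReal : ℝ) : EReal) := (EReal.coe_toReal het heb).symm
    have h1 : (e - u 0).toENN = ENNReal.ofReal (e.toReal - c) := by
      rw [hu0]; nth_rewrite 1 [he]; rw [← EReal.coe_sub, myToENN_coe]
    have h2 : e.toENN = ENNReal.ofReal e.toReal := by rw [EReal.toENN, if_neg het]
    rw [h1, h2]
    calc ENNReal.ofReal e.toReal = ENNReal.ofReal ((e.toReal - c) + c) := by congr 1; ring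
    _ ≤ _ := ENNReal.ofReal_add_le
  have hE : ∀ e : EReal, (e - u 0).toENN ≤ e.toENN + ENNReal.ofReal (-c) := by
    intro e
    rcases eq_or_ne e ⊤ with rfl | het
    · rw [myToENN_top]; exact le_top
    rcases eq_or_ne e ⊥ with rfl | heb
    · rw [EReal.bot_sub, myToENN_bot]; exact zero_le
    have he : e = ((e.toReal : ℝ) : EReal) := (EReal.coe_toReal het heb).symm
    have h1 : (e - u 0).toENN = ENNReal.ofReal (e.toReal - c) := by
      rw [hu0]; nth_rewrite 1 [he]; rw [← EReal.coe_sub, myToENN_coe]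
    have h2 : e.toENN = ENNReal.ofReal e.toReal := by rw [EReal.toENN, if_neg het]
    rw [h1, h2]
    calc ENNReal.ofReal (e.toReal - c) = ENNReal.ofReal (e.toReal + (-c)) := by
          rw [sub_eq_add_neg]
    _ ≤ _ := ENNReal.ofReal_add_le
  -- key consequence of (A2)
  have key1 : ∀ f : Ω → ℝ, Measurable f → (∀ ω, 0 ≤ f ω) →
      (∫⁻ ω, (if β ≤ f ω then (Phi (f ω)).toENN else 0) ∂P) < ⊤ →
      ∀ l : ℝ, 0 < l → ∫⁻ ω, (Phi (l * max (f ω) β)).toENN ∂P < ⊤ := by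
    intro f hf hf0 H l hl
    have hg : ∫⁻ ω, (Phi (max (f ω) β)).toENN ∂P < ⊤ := by
      have hpt : ∀ ω, (Phi (max (f ω) β)).toENN ≤
          ENNReal.ofReal c + (if β ≤ f ω then (Phi (f ω)).toENN else 0) := by
        intro ω
        by_cases hω : β ≤ f ω
        · rw [max_eq_left hω, if_pos hω]
          exact le_add_self
        · rw [max_eq_right (le_of_not_ge hω), if_neg hω, hPhiβ, myToENN_coe, add_zero]
      calc ∫⁻ ω, (Phi (max (f ω) β)).toENN ∂P
          ≤ ∫⁻ ω, (ENNReal.ofReal c + (if β ≤ f ω then (Phi (f ω)).toENN else 0)) ∂P :=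
            lintegral_mono hpt
      _ = ENNReal.ofReal c * P univ
            + ∫⁻ ω, (if β ≤ f ω then (Phi (f ω)).toENN else 0) ∂P := by
            rw [lintegral_add_left measurable_const, lintegral_const]
      _ < ⊤ := by
            refine ENNReal.add_lt_top.mpr ⟨?_, H⟩
            exact ENNReal.mul_lt_top ENNReal.ofReal_lt_top (measure_lt_top P univ)
    exact hA2 (fun ω => max (f ω) β) (hf.max measurable_const)
      (fun ω => le_trans (hf0 ω) (le_max_left _ _)) hg l hl
  constructor
  · -- Part 1
    intro f hf hf0
    constructor
    · intro H l hl
      refine lt_of_le_of_lt (lintegral_mono fun ω => ?_) (key1 f hf hf0 H l hl)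
      by_cases hω : β ≤ f ω
      · rw [if_pos hω, max_eq_left hω]
      · rw [if_neg hω]; exact zero_le
    · intro H
      have h := H 1 one_pos
      simpa using h
  · -- Part 2
    intro f hf hf0
    constructor
    · intro H l hl
      have H1 : (∫⁻ ω, (if β ≤ f ω then (Phi (f ω)).toENN else 0) ∂P) < ⊤ := by
        have hpt : ∀ ω, (if β ≤ f ω then (Phi (f ω)).toENN else 0)
            ≤ Phat (f ω) + ENNReal.ofReal c := by
          intro ω
          by_cases hω : β ≤ f ω
          · rw [if_pos hω]
            calc (Phi (f ω)).toENN
                ≤ (Phi (f ω) - u 0).toENN + ENNReal.ofReal c := hD _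
            _ ≤ Phat (f ω) + ENNReal.ofReal c := add_le_add_left (hC _ hω) _
          · rw [if_neg hω]; exact zero_le
        calc ∫⁻ ω, (if β ≤ f ω then (Phi (f ω)).toENN else 0) ∂P
            ≤ ∫⁻ ω, (Phat (f ω) + ENNReal.ofReal c) ∂P := lintegral_mono hpt
        _ = ∫⁻ ω, Phat (f ω) ∂P + ENNReal.ofReal c * P univ := by
            rw [lintegral_add_right _ measurable_const, lintegral_const]
        _ < ⊤ := by
            refine ENNReal.add_lt_top.mpr ⟨H, ?_⟩
            exact ENNReal.mul_lt_top ENNReal.ofReal_lt_top (measure_lt_top P univ)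
      have key := key1 f hf hf0 H1 l hl
      have hpt2 : ∀ ω, Phat (l * f ω)
          ≤ (Phi (l * max (f ω) β)).toENN + ENNReal.ofReal (-c) := by
        intro ω
        have hm1 : Phat (l * f ω) ≤ Phat (l * max (f ω) β) :=
          hPmono _ _ (mul_nonneg hl.le (hf0 ω))
            (mul_le_mul_of_nonneg_left (le_max_left _ _) hl.le)
        have hm2 : Phat (l * max (f ω) β) ≤ (Phi (l * max (f ω) β) - u 0).toENN :=
          hB _ (mul_nonneg hl.le (le_trans (hf0 ω) (le_max_left _ _)))
        exact le_trans hm1 (le_trans hm2 (hE _))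
      calc ∫⁻ ω, Phat (l * f ω) ∂P
          ≤ ∫⁻ ω, ((Phi (l * max (f ω) β)).toENN + ENNReal.ofReal (-c)) ∂P :=
            lintegral_mono hpt2
      _ = ∫⁻ ω, (Phi (l * max (f ω) β)).toENN ∂P + ENNReal.ofReal (-c) * P univ := by
            rw [lintegral_add_right _ measurable_const, lintegral_const]
      _ < ⊤ := by
            refine ENNReal.add_lt_top.mpr ⟨key, ?_⟩
            exact ENNReal.mul_lt_top ENNReal.ofReal_lt_top (measure_lt_top P univ)
    · intro H
      have h := H 1 one_pos
      simpa using h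

end
end

section
/- Assume (A1) and (A2). Let η⁰, η¹ ∈ L_Φ and set η^x := x·η¹ + (1-x)·η⁰ for x ∈ [0, 1]. Then (with the convention 0·Φ'(0) := 0): η¹·Φ'(η¹) ∈ L¹(P), (η⁰·Φ'(η¹))⁺ ∈ L¹(P), and the left derivative at x = 1 of the convex function x ↦ E[Φ(η^x)] exists in (-∞, +∞] and equals E[Φ'(η¹)·(η¹ - η⁰)], i.e., lim_{x↑1} (E[Φ(η¹)] - E[Φ(η^x)])/(1 - x) = E[Φ'(η¹)·(η¹ - η⁰)]. -/
open MeasureTheory Filter Set Topology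
open scoped ENNReal

noncomputable section

/-- Extended-real-valued expectation: the lower integral of the positive part minus the lower
integral of the negative part. -/
def ewp {Ω : Type*} [MeasurableSpace Ω] (P : Measure Ω) (H : Ω → EReal) : EReal :=
  ((∫⁻ ω, (H ω).toENN ∂P : ℝ≥0∞) : EReal) - ((∫⁻ ω, (-(H ω)).toENN ∂P : ℝ≥0∞) : EReal)

namespace EReal

@[simp] lemma toENN_top : (⊤ : EReal).toENN = ⊤ := rfl

@[simp] lemma toENN_bot : (⊥ : EReal).toENN = 0 := by
  simp [toENN, EReal.toReal_bot]

@[simp] lemma toENN_coe (r : ℝ) : ((r : EReal)).toENN = ENNReal.ofReal r := by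
  simp [toENN]

lemma toENN_mono : Monotone EReal.toENN := by
  intro x y hxy
  rcases eq_or_ne y ⊤ with rfl | hy
  · simp [toENN]
  rcases eq_or_ne x ⊥ with rfl | hx
  · simp [toENN]
  have hx' : x ≠ ⊤ := fun h => hy (top_le_iff.1 (h ▸ hxy))
  have hy' : y ≠ ⊥ := fun h => hx (le_bot_iff.1 (h ▸ hxy))
  simp only [toENN, if_neg hx', if_neg hy]
  exact ENNReal.ofReal_le_ofReal (EReal.toReal_le_toReal hxy hx hy)

lemma toENN_eq_top_iff {x : EReal} : x.toENN = ⊤ ↔ x = ⊤ := by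
  unfold toENN
  split
  · simp_all
  · simp_all [ENNReal.ofReal_ne_top]

lemma measurable_toENN : Measurable EReal.toENN := by
  have : EReal.toENN = fun x => Set.piecewise {(⊤ : EReal)} (fun _ => (⊤ : ℝ≥0∞))
      (fun x => ENNReal.ofReal x.toReal) x := by
    funext x
    by_cases h : x = ⊤ <;> simp [toENN, h, Set.piecewise]
  rw [this]
  exact Measurable.piecewise (measurableSet_singleton _) measurable_const
    (ENNReal.measurable_ofReal.comp measurable_ereal_toReal)

lemma toENN_add_coe_le (A : EReal) (r : ℝ) :
    (A + (r : EReal)).toENN ≤ A.toENN + ENNReal.ofReal r := by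
  induction A with
  | bot => simp
  | coe s =>
      rw [← EReal.coe_add, toENN_coe, toENN_coe]
      exact ENNReal.ofReal_add_le
  | top => simp [le_top]

lemma ofReal_abs_toReal_le (x : EReal) :
    ENNReal.ofReal |x.toReal| ≤ x.toENN + (-x).toENN := by
  induction x with
  | bot => simp
  | coe r =>
      rw [← EReal.coe_neg, toENN_coe, toENN_coe]
      rcases abs_cases r with ⟨h, _⟩ | ⟨h, _⟩
      · rw [EReal.toReal_coe, h]; exact le_add_of_le_of_nonneg le_rfl zero_le
      · rw [EReal.toReal_coe, h]; exact le_add_of_nonneg_of_le zero_le le_rfl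
  | top => simp

lemma coe_ennreal_eq_coe_toReal (j : ℝ≥0∞) (hj : j ≠ ⊤) :
    ((j : EReal)) = ((j.toReal : ℝ) : EReal) := by
  have h1 : ((j : EReal)) ≠ ⊤ := by simpa [EReal.coe_ennreal_eq_top_iff]
  have h2 : ((j : EReal)) ≠ ⊥ := EReal.coe_ennreal_ne_bot j
  have := EReal.coe_toReal h1 h2
  rw [EReal.toReal_coe_ennreal] at this
  exact this.symm

end EReal

lemma ewp_eq_integral {Ω : Type*} [MeasurableSpace Ω] {P : Measure Ω} {H : Ω → EReal}
    (hm : Measurable H)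
    (hp : ∫⁻ ω, (H ω).toENN ∂P ≠ ⊤) (hn : ∫⁻ ω, (-(H ω)).toENN ∂P ≠ ⊤) :
    Integrable (fun ω => (H ω).toReal) P ∧
      ewp P H = ((∫ ω, (H ω).toReal ∂P : ℝ) : EReal) := by
  have hmp : Measurable fun ω => (H ω).toENN := EReal.measurable_toENN.comp hm
  have hmn : Measurable fun ω => (-(H ω)).toENN := EReal.measurable_toENN.comp hm.neg
  have hae_top : ∀ᵐ ω ∂P, H ω ≠ ⊤ := by
    filter_upwards [ae_lt_top hmp hp] with ω hω
    intro h; rw [h] at hω; simp at hω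
  have hae_bot : ∀ᵐ ω ∂P, H ω ≠ ⊥ := by
    filter_upwards [ae_lt_top hmn hn] with ω hω
    intro h; rw [h] at hω; simp at hω
  -- integrability
  have hint : Integrable (fun ω => (H ω).toReal) P := by
    refine ⟨(hm.ereal_toReal).aestronglyMeasurable, ?_⟩
    rw [hasFiniteIntegral_iff_norm]
    calc ∫⁻ ω, ENNReal.ofReal ‖(H ω).toReal‖ ∂P
        ≤ ∫⁻ ω, ((H ω).toENN + (-(H ω)).toENN) ∂P := by
          refine lintegral_mono fun ω => ?_
          rw [Real.norm_eq_abs]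
          exact EReal.ofReal_abs_toReal_le (H ω)
      _ < ⊤ := by
          rw [lintegral_add_left hmp]
          exact ENNReal.add_lt_top.2 ⟨hp.lt_top, hn.lt_top⟩
  refine ⟨hint, ?_⟩
  have e1 : ∫⁻ ω, (H ω).toENN ∂P = ∫⁻ ω, ENNReal.ofReal ((H ω).toReal) ∂P := by
    refine lintegral_congr_ae ?_
    filter_upwards [hae_top] with ω hω
    simp [EReal.toENN, hω]
  have e2 : ∫⁻ ω, (-(H ω)).toENN ∂P = ∫⁻ ω, ENNReal.ofReal (-(H ω).toReal) ∂P := by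
    refine lintegral_congr_ae ?_
    filter_upwards [hae_bot] with ω hω
    have : -(H ω) ≠ ⊤ := by simp [EReal.neg_eq_top_iff, hω]
    simp [EReal.toENN, this, EReal.toReal_neg]
  rw [ewp, e1, e2]
  rw [integral_eq_lintegral_pos_part_sub_lintegral_neg_part hint]
  rw [e1] at hp; rw [e2] at hn
  rw [EReal.coe_sub]
  congr 1
  · exact EReal.coe_ennreal_eq_coe_toReal _ hp
  · exact EReal.coe_ennreal_eq_coe_toReal _ hn


lemma EReal.toENN_max_le (A B : EReal) : (max A B).toENN ≤ A.toENN + B.toENN := by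
  rcases le_total A B with h | h
  · rw [max_eq_right h]; exact le_add_self
  · rw [max_eq_left h]; exact le_self_add

lemma ewp_eq_integral_of_ge {Ω : Type*} [MeasurableSpace Ω] {P : Measure Ω} [IsFiniteMeasure P]
    {H : Ω → EReal} (hm : Measurable H) (c0 : ℝ) (hc : ∀ ω, ((c0 : ℝ) : EReal) ≤ H ω)
    (hp : ∫⁻ ω, (H ω).toENN ∂P ≠ ⊤) :
    Integrable (fun ω => (H ω).toReal) P ∧
      ewp P H = ((∫ ω, (H ω).toReal ∂P : ℝ) : EReal) := by
  refine ewp_eq_integral hm hp ?_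
  have hle : ∀ ω, (-(H ω)).toENN ≤ ENNReal.ofReal (-c0) := by
    intro ω
    have h1 : -(H ω) ≤ ((-c0 : ℝ) : EReal) := by
      rw [EReal.coe_neg]; exact EReal.neg_le_neg_iff.2 (hc ω)
    calc (-(H ω)).toENN ≤ ((-c0 : ℝ) : EReal).toENN := EReal.toENN_mono h1
      _ = ENNReal.ofReal (-c0) := EReal.toENN_coe _
  refine ne_top_of_le_ne_top ?_ (lintegral_mono hle)
  rw [lintegral_const]
  exact ENNReal.mul_ne_top ENNReal.ofReal_ne_top (measure_ne_top P univ)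


lemma ereal_MCT {Ω : Type*} [MeasurableSpace Ω] {P : Measure Ω} {f : ℕ → Ω → ℝ} {G : Ω → EReal}
    (hfi : ∀ n, Integrable (f n) P)
    (hmono : ∀ᵐ ω ∂P, Monotone fun n => f n ω)
    (hG : Measurable G)
    (hlim : ∀ᵐ ω ∂P, Tendsto (fun n => ((f n ω : ℝ) : EReal)) atTop (𝓝 (G ω))) :
    Tendsto (fun n => ((∫ ω, f n ω ∂P : ℝ) : EReal)) atTop (𝓝 (ewp P G)) := by
  classical
  set g : ℕ → Ω → ℝ := fun n ω => f n ω - f 0 ω with hg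
  have hgi : ∀ n, Integrable (g n) P := fun n => (hfi n).sub (hfi 0)
  have hg_nonneg : ∀ n, 0 ≤ᵐ[P] g n := by
    intro n
    filter_upwards [hmono] with ω hω
    simp only [hg, Pi.zero_apply, sub_nonneg]
    exact hω (Nat.zero_le n)
  have hGe : ∀ᵐ ω ∂P, ((f 0 ω : ℝ) : EReal) ≤ G ω := by
    filter_upwards [hmono, hlim] with ω hω hlω
    refine ge_of_tendsto hlω (Eventually.of_forall fun n => ?_)
    exact EReal.coe_le_coe_iff.2 (hω (Nat.zero_le n))
  -- pointwise tendsto of the nonnegative increments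
  have hptw : ∀ᵐ ω ∂P, Tendsto (fun n => ENNReal.ofReal (g n ω)) atTop
      (𝓝 ((G ω - ((f 0 ω : ℝ) : EReal)).toENN)) := by
    filter_upwards [hmono, hlim, hGe] with ω hω hlω hGeω
    rcases eq_or_ne (G ω) ⊤ with hT | hT
    · have h1 : Tendsto (fun n => f n ω) atTop atTop := by
        rw [hT, EReal.tendsto_nhds_top_iff_real] at hlω
        refine tendsto_atTop.2 fun b => ?_
        filter_upwards [hlω b] with n hn
        exact (EReal.coe_lt_coe_iff.1 hn).le
      have h2 : Tendsto (fun n => g n ω) atTop atTop := by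
        simpa [hg, sub_eq_add_neg] using tendsto_atTop_add_const_right atTop (-(f 0 ω)) h1
      have h3 : (G ω - ((f 0 ω : ℝ) : EReal)).toENN = ⊤ := by
        rw [hT, EReal.top_sub_coe, EReal.toENN_eq_top_iff]
      rw [h3]
      exact ENNReal.tendsto_ofReal_atTop.comp h2
    · have hBo : G ω ≠ ⊥ := fun h => by
        rw [h] at hGeω; exact (EReal.coe_ne_bot _ (le_bot_iff.1 hGeω))
      set r := (G ω).toReal with hr
      have hGr : G ω = (r : EReal) := (EReal.coe_toReal hT hBo).symm
      have h1 : Tendsto (fun n => f n ω) atTop (𝓝 r) := by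
        rw [hGr] at hlω
        exact EReal.tendsto_coe.1 hlω
      have h2 : Tendsto (fun n => g n ω) atTop (𝓝 (r - f 0 ω)) :=
        h1.sub_const _
      have h3 : (G ω - ((f 0 ω : ℝ) : EReal)).toENN = ENNReal.ofReal (r - f 0 ω) := by
        rw [hGr, ← EReal.coe_sub, EReal.toENN_coe]
      rw [h3]
      exact (ENNReal.continuous_ofReal.tendsto _).comp h2
  -- MCT for the lintegrals
  have hgENNmeas : ∀ n, AEMeasurable (fun ω => ENNReal.ofReal (g n ω)) P :=
    fun n => ENNReal.measurable_ofReal.comp_aemeasurable (hgi n).aemeasurable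
  have hmono' : ∀ᵐ ω ∂P, Monotone fun n => ENNReal.ofReal (g n ω) := by
    filter_upwards [hmono] with ω hω
    intro m n hmn
    exact ENNReal.ofReal_le_ofReal (by simp only [hg, sub_le_sub_iff_right]; exact hω hmn)
  set S : ℝ≥0∞ := ∫⁻ ω, (G ω - ((f 0 ω : ℝ) : EReal)).toENN ∂P with hS
  have hMCT : Tendsto (fun n => ∫⁻ ω, ENNReal.ofReal (g n ω) ∂P) atTop (𝓝 S) :=
    lintegral_tendsto_of_tendsto_of_monotone hgENNmeas hmono' hptw
  -- rewrite each lintegral as ofReal of a Bochner integral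
  set C : ℝ := ∫ ω, f 0 ω ∂P with hC
  set rn : ℕ → ℝ := fun n => ∫ ω, g n ω ∂P with hrn
  have hrn_nonneg : ∀ n, 0 ≤ rn n := fun n => integral_nonneg_of_ae (hg_nonneg n)
  have hrn_eq : ∀ n, ∫ ω, f n ω ∂P = rn n + C := by
    intro n
    rw [hrn, hg]
    simp only
    rw [integral_sub (hfi n) (hfi 0)]
    ring
  have hlint_eq : ∀ n, ∫⁻ ω, ENNReal.ofReal (g n ω) ∂P = ENNReal.ofReal (rn n) :=
    fun n => (ofReal_integral_eq_lintegral_ofReal (hgi n) (hg_nonneg n)).symm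
  have hMCT' : Tendsto (fun n => ENNReal.ofReal (rn n)) atTop (𝓝 S) := by
    refine hMCT.congr fun n => hlint_eq n
  -- the key decomposition of `ewp`
  have habs : ∫⁻ ω, ENNReal.ofReal |f 0 ω| ∂P ≠ ⊤ := by
    have := (hfi 0).2
    rw [hasFiniteIntegral_iff_norm] at this
    simpa [Real.norm_eq_abs] using this.ne
  have hq : ∫⁻ ω, (-(G ω)).toENN ∂P ≠ ⊤ := by
    refine ne_top_of_le_ne_top habs (lintegral_mono_ae ?_)
    filter_upwards [hGe] with ω hω
    have h1 : -(G ω) ≤ ((-(f 0 ω) : ℝ) : EReal) := by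
      rw [EReal.coe_neg]
      exact EReal.neg_le_neg_iff.2 hω
    calc (-(G ω)).toENN ≤ ((-(f 0 ω) : ℝ) : EReal).toENN := EReal.toENN_mono h1
      _ = ENNReal.ofReal (-(f 0 ω)) := EReal.toENN_coe _
      _ ≤ ENNReal.ofReal |f 0 ω| := ENNReal.ofReal_le_ofReal (neg_le_abs _)
  have hp_iff : (∫⁻ ω, (G ω).toENN ∂P = ⊤) ↔ S = ⊤ := by
    constructor
    · intro hp
      by_contra hS'
      have hle : ∀ ω, (G ω).toENN ≤ (G ω - ((f 0 ω : ℝ) : EReal)).toENN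
          + ENNReal.ofReal |f 0 ω| := by
        intro ω
        have h0 : G ω = (G ω - ((f 0 ω : ℝ) : EReal)) + ((f 0 ω : ℝ) : EReal) :=
          (EReal.sub_add_cancel).symm
        calc (G ω).toENN ≤ (G ω - ((f 0 ω : ℝ) : EReal)).toENN + ENNReal.ofReal (f 0 ω) := by
              nth_rewrite 1 [h0]; exact EReal.toENN_add_coe_le _ _
          _ ≤ _ := by gcongr; exact le_abs_self _
      have hmeasabs : AEMeasurable (fun ω => ENNReal.ofReal |f 0 ω|) P :=
        ENNReal.measurable_ofReal.comp_aemeasurable (hfi 0).abs.aemeasurable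
      have hfin : ∫⁻ ω, ((G ω - ((f 0 ω : ℝ) : EReal)).toENN + ENNReal.ofReal |f 0 ω|) ∂P < ⊤ := by
        rw [lintegral_add_right' _ hmeasabs]
        exact ENNReal.add_lt_top.2 ⟨lt_top_iff_ne_top.2 hS', lt_top_iff_ne_top.2 habs⟩
      have := (lintegral_mono hle).trans_lt hfin
      exact absurd hp this.ne
    · intro hS'
      by_contra hp
      have hle : ∀ ω, (G ω - ((f 0 ω : ℝ) : EReal)).toENN ≤ (G ω).toENN
          + ENNReal.ofReal |f 0 ω| := by
        intro ω
        have h0 : G ω - ((f 0 ω : ℝ) : EReal) = G ω + ((-(f 0 ω) : ℝ) : EReal) := by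
          rw [EReal.coe_neg, sub_eq_add_neg]
        calc (G ω - ((f 0 ω : ℝ) : EReal)).toENN
            ≤ (G ω).toENN + ENNReal.ofReal (-(f 0 ω)) := by
              rw [h0]; exact EReal.toENN_add_coe_le _ _
          _ ≤ _ := by gcongr; exact neg_le_abs _
      have hmeasabs : AEMeasurable (fun ω => ENNReal.ofReal |f 0 ω|) P :=
        ENNReal.measurable_ofReal.comp_aemeasurable (hfi 0).abs.aemeasurable
      have hfin : ∫⁻ ω, ((G ω).toENN + ENNReal.ofReal |f 0 ω|) ∂P < ⊤ := by
        rw [lintegral_add_right' _ hmeasabs]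
        exact ENNReal.add_lt_top.2 ⟨lt_top_iff_ne_top.2 hp, lt_top_iff_ne_top.2 habs⟩
      have := (lintegral_mono hle).trans_lt hfin
      rw [hS] at hS'
      exact absurd hS' this.ne
  -- main case split
  rcases eq_or_ne S ⊤ with hStop | hSne
  · -- `ewp P G = ⊤` and the integrals tend to `⊤`
    have hp : ∫⁻ ω, (G ω).toENN ∂P = ⊤ := hp_iff.2 hStop
    have hewp : ewp P G = ⊤ := by
      rw [ewp, hp, EReal.coe_ennreal_top,
        EReal.coe_ennreal_eq_coe_toReal _ hq, EReal.top_sub_coe]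
    rw [hewp]
    rw [EReal.tendsto_nhds_top_iff_real]
    intro x
    have hrn_top : Tendsto rn atTop atTop := by
      refine tendsto_atTop.2 fun b => ?_
      have : {y : ℝ≥0∞ | ENNReal.ofReal |b| < y} ∈ 𝓝 (⊤ : ℝ≥0∞) :=
        lt_mem_nhds (ENNReal.ofReal_lt_top)
      rw [hStop] at hMCT'
      filter_upwards [hMCT'.eventually this] with n hn
      have : |b| < rn n := by
        rw [ENNReal.ofReal_lt_ofReal_iff_of_nonneg (abs_nonneg b)] at hn
        exact hn
      exact le_of_lt (lt_of_le_of_lt (le_abs_self b) this)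
    have : Tendsto (fun n => ∫ ω, f n ω ∂P) atTop atTop := by
      simp only [hrn_eq]
      exact tendsto_atTop_add_const_right _ _ hrn_top
    filter_upwards [this.eventually_gt_atTop x] with n hn
    exact EReal.coe_lt_coe_iff.2 hn
  · -- finite case
    have hp : ∫⁻ ω, (G ω).toENN ∂P ≠ ⊤ := fun h => hSne (hp_iff.1 h)
    obtain ⟨hGint, hewp⟩ := ewp_eq_integral hG hp hq
    -- identify S
    have hae_fin : ∀ᵐ ω ∂P, G ω ≠ ⊤ := by
      have hmp : Measurable fun ω => (G ω).toENN := EReal.measurable_toENN.comp hG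
      filter_upwards [ae_lt_top hmp hp] with ω hω
      intro h; rw [h] at hω; simp at hω
    have hsub : Integrable (fun ω => (G ω).toReal - f 0 ω) P := hGint.sub (hfi 0)
    have hnn : 0 ≤ᵐ[P] fun ω => (G ω).toReal - f 0 ω := by
      filter_upwards [hae_fin, hGe] with ω hω hω2
      have hBo : G ω ≠ ⊥ := fun h => by
        rw [h] at hω2; exact (EReal.coe_ne_bot _ (le_bot_iff.1 hω2))
      simp only [Pi.zero_apply, sub_nonneg]
      have := EReal.toReal_le_toReal hω2 (EReal.coe_ne_bot _) hω
      simpa using this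
    have hS_eq : S = ENNReal.ofReal (∫ ω, ((G ω).toReal - f 0 ω) ∂P) := by
      have hcongr : ∫⁻ ω, (G ω - ((f 0 ω : ℝ) : EReal)).toENN ∂P
          = ∫⁻ ω, ENNReal.ofReal ((G ω).toReal - f 0 ω) ∂P := by
        refine lintegral_congr_ae ?_
        filter_upwards [hae_fin, hGe] with ω hω hω2
        have hBo : G ω ≠ ⊥ := fun h => by
          rw [h] at hω2; exact (EReal.coe_ne_bot _ (le_bot_iff.1 hω2))
        have heq : G ω - ((f 0 ω : ℝ) : EReal) = (((G ω).toReal - f 0 ω : ℝ) : EReal) := by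
          rw [EReal.coe_sub, EReal.coe_toReal hω hBo]
        rw [heq, EReal.toENN_coe]
      rw [hS, hcongr, ← ofReal_integral_eq_lintegral_ofReal hsub hnn]
    have hIG : ∫ ω, ((G ω).toReal - f 0 ω) ∂P = (∫ ω, (G ω).toReal ∂P) - C := by
      rw [integral_sub hGint (hfi 0)]
    have hrn_lim : Tendsto rn atTop (𝓝 (S.toReal)) := by
      have := (ENNReal.tendsto_toReal hSne).comp hMCT'
      refine this.congr fun n => ?_
      simp only [Function.comp_apply, ENNReal.toReal_ofReal (hrn_nonneg n)]
    have hSval : S.toReal = (∫ ω, (G ω).toReal ∂P) - C := by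
      rw [hS_eq, ENNReal.toReal_ofReal (integral_nonneg_of_ae hnn), hIG]
    rw [hewp]
    have : Tendsto (fun n => ∫ ω, f n ω ∂P) atTop (𝓝 (∫ ω, (G ω).toReal ∂P)) := by
      simp only [hrn_eq]
      have h1 : Tendsto (fun n => rn n + C) atTop (𝓝 (S.toReal + C)) := hrn_lim.add_const C
      have h2 : S.toReal + C = ∫ ω, (G ω).toReal ∂P := by rw [hSval]; ring
      rw [← h2]; exact h1
    exact EReal.tendsto_coe.2 this

-- helpers
lemma EReal.le_coe_of_forall_add {X : EReal} {r : ℝ}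
    (h : ∀ ε : ℝ, 0 < ε → X ≤ ((r + ε : ℝ) : EReal)) : X ≤ (r : EReal) := by
  induction X with
  | bot => exact bot_le
  | coe x =>
      refine EReal.coe_le_coe_iff.2 ?_
      by_contra hx
      push_neg at hx
      have := EReal.coe_le_coe_iff.1 (h ((x - r) / 2) (by linarith))
      linarith
  | top =>
      exfalso
      have := h 1 one_pos
      exact (EReal.coe_ne_top _) (top_le_iff.1 this)

lemma EReal.coe_le_of_forall_sub {X : EReal} {r : ℝ}
    (h : ∀ ε : ℝ, 0 < ε → ((r - ε : ℝ) : EReal) ≤ X) : (r : EReal) ≤ X := by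
  induction X with
  | bot =>
      exfalso
      have := h 1 one_pos
      exact (EReal.coe_ne_bot _) (le_bot_iff.1 this)
  | coe x =>
      refine EReal.coe_le_coe_iff.2 ?_
      by_contra hx
      push_neg at hx
      have := EReal.coe_le_coe_iff.1 (h ((r - x) / 2) (by linarith))
      linarith
  | top => exact le_top


section PhiLayer

variable {a : EReal} {u : ℝ → EReal} {du : ℝ → ℝ} {Phi : ℝ → EReal} {DPhi : ℝ → ℝ}

/-- Global tangent-line bound for the concave function `u`. -/
lemma u_tangent
    (hu_ne_top : ∀ x : ℝ, u x ≠ ⊤)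
    (hu_bot : ∀ x : ℝ, (x : EReal) < a → u x = ⊥)
    (hu_fin : ∀ x : ℝ, a < (x : EReal) → u x ≠ ⊥)
    (hu_mono : Monotone u)
    (hdu : ∀ x : ℝ, a < (x : EReal) → HasDerivAt (fun t : ℝ => (u t).toReal) (du x) x)
    (hdu_pos : ∀ x : ℝ, a < (x : EReal) → 0 < du x)
    (hdu_anti : StrictAntiOn du {x : ℝ | a < (x : EReal)})
    (x0 : ℝ) (hx0 : a < (x0 : EReal)) (z : ℝ) :
    u z ≤ (((u x0).toReal + du x0 * (z - x0) : ℝ) : EReal) := by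
  set f : ℝ → ℝ := fun t => (u t).toReal with hf
  have hmem : ∀ w : ℝ, x0 ≤ w → a < (w : EReal) :=
    fun w hw => lt_of_lt_of_le hx0 (EReal.coe_le_coe_iff.2 hw)
  -- the real inequality on `(a, ∞)`
  have key : ∀ w : ℝ, a < (w : EReal) → f w ≤ f x0 + du x0 * (w - x0) := by
    intro w hw
    rcases lt_trichotomy w x0 with hlt | rfl | hgt
    · -- w < x0
      have hcont : ContinuousOn f (Icc w x0) := by
        intro t ht
        have hta : a < (t : EReal) := lt_of_lt_of_le hw (EReal.coe_le_coe_iff.2 ht.1)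
        exact ((hdu t hta).continuousAt).continuousWithinAt
      have hderiv : ∀ t ∈ Ioo w x0, HasDerivAt f (du t) t := by
        intro t ht
        have hta : a < (t : EReal) := lt_of_lt_of_le hw (EReal.coe_le_coe_iff.2 ht.1.le)
        exact hdu t hta
      obtain ⟨c, hc, hceq⟩ := exists_hasDerivAt_eq_slope f du hlt hcont hderiv
      have hca : a < (c : EReal) := lt_of_lt_of_le hw (EReal.coe_le_coe_iff.2 hc.1.le)
      have hdc : du x0 < du c := hdu_anti hca hx0 hc.2
      have hne0 : x0 - w ≠ 0 := sub_ne_zero.2 hlt.ne'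
      rw [eq_div_iff hne0] at hceq
      nlinarith [hdc, hceq, hc.2, hlt]
    · simp
    · -- x0 < w
      have hcont : ContinuousOn f (Icc x0 w) := by
        intro t ht
        exact ((hdu t (hmem t ht.1)).continuousAt).continuousWithinAt
      have hderiv : ∀ t ∈ Ioo x0 w, HasDerivAt f (du t) t := by
        intro t ht
        exact hdu t (hmem t ht.1.le)
      obtain ⟨c, hc, hceq⟩ := exists_hasDerivAt_eq_slope f du hgt hcont hderiv
      have hdc : du c < du x0 := hdu_anti hx0 (hmem c hc.1.le) hc.1
      have hne0 : w - x0 ≠ 0 := sub_ne_zero.2 hgt.ne'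
      rw [eq_div_iff hne0] at hceq
      nlinarith [hdc, hceq, hc.1, hgt]
  rcases lt_trichotomy ((z : ℝ) : EReal) a with hza | hza | hza
  · rw [hu_bot z hza]; exact bot_le
  · -- z = a (as EReal); use monotonicity and points slightly above
    rcases eq_or_ne (u z) ⊥ with hbot | hne
    · rw [hbot]; exact bot_le
    refine EReal.le_coe_of_forall_add fun ε hε => ?_
    have hd0 : 0 < du x0 := hdu_pos x0 hx0
    set w : ℝ := z + ε / du x0 with hwdef
    have hzw : z < w := by
      have : 0 < ε / du x0 := div_pos hε hd0
      simp [hwdef]; linarith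
    have hwa : a < (w : EReal) := by
      rw [← hza]
      exact_mod_cast hzw
    have h1 : u z ≤ u w := hu_mono hzw.le
    have h2 : u w = ((f w : ℝ) : EReal) := (EReal.coe_toReal (hu_ne_top w) (hu_fin w hwa)).symm
    have h3 : f w ≤ f x0 + du x0 * (w - x0) := key w hwa
    have h4 : f x0 + du x0 * (w - x0) = f x0 + du x0 * (z - x0) + ε := by
      rw [hwdef]; field_simp; ring
    calc u z ≤ ((f w : ℝ) : EReal) := h2 ▸ h1
      _ ≤ (((u x0).toReal + du x0 * (z - x0) + ε : ℝ) : EReal) := by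
          refine EReal.coe_le_coe_iff.2 ?_
          show f w ≤ f x0 + du x0 * (z - x0) + ε
          linarith [h3, h4]
  · -- a < z
    have : u z = ((f z : ℝ) : EReal) := (EReal.coe_toReal (hu_ne_top z) (hu_fin z hza)).symm
    rw [this]
    exact EReal.coe_le_coe_iff.2 (key z hza)


/-- `Phi y ≥ u 0`. -/
lemma Phi_ge_u0 (hPhi : ∀ y : ℝ, Phi y = ⨆ x : ℝ, (u x - ((x * y : ℝ) : EReal))) (y : ℝ) :
    u 0 ≤ Phi y := by
  rw [hPhi]
  have := le_iSup (fun x : ℝ => u x - ((x * y : ℝ) : EReal)) 0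
  simpa using this

lemma Phi_ne_bot (ha : a < 0)
    (hu_fin : ∀ x : ℝ, a < (x : EReal) → u x ≠ ⊥)
    (hPhi : ∀ y : ℝ, Phi y = ⨆ x : ℝ, (u x - ((x * y : ℝ) : EReal))) (y : ℝ) :
    Phi y ≠ ⊥ := by
  have h0 : a < ((0 : ℝ) : EReal) := by exact_mod_cast ha
  intro h
  exact hu_fin 0 h0 (le_bot_iff.1 (h ▸ Phi_ge_u0 hPhi y))

lemma Phi_lt_top
    (hu_ne_top : ∀ x : ℝ, u x ≠ ⊤)
    (hu_bot : ∀ x : ℝ, (x : EReal) < a → u x = ⊥)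
    (hu_fin : ∀ x : ℝ, a < (x : EReal) → u x ≠ ⊥)
    (hu_mono : Monotone u)
    (hdu : ∀ x : ℝ, a < (x : EReal) → HasDerivAt (fun t : ℝ => (u t).toReal) (du x) x)
    (hdu_pos : ∀ x : ℝ, a < (x : EReal) → 0 < du x)
    (hdu_anti : StrictAntiOn du {x : ℝ | a < (x : EReal)})
    (hdu_inada_top : ∀ M : ℝ, ∃ x : ℝ, a < (x : EReal) ∧ M ≤ du x)
    (hdu_inada_zero : Tendsto du atTop (𝓝 0))
    (ha : a < 0)
    (hPhi : ∀ y : ℝ, Phi y = ⨆ x : ℝ, (u x - ((x * y : ℝ) : EReal)))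
    (y : ℝ) (hy : 0 < y) : Phi y ≠ ⊤ := by
  -- a point with small slope
  obtain ⟨x0, hx0y, hx0one⟩ : ∃ x0 : ℝ, du x0 < y ∧ 1 ≤ x0 := by
    have h1 : ∀ᶠ x in atTop, du x < y := hdu_inada_zero.eventually (Iio_mem_nhds hy)
    rcases (h1.and (eventually_ge_atTop (1 : ℝ))).exists with ⟨x0, h, h'⟩
    exact ⟨x0, h, h'⟩
  have hx0a : a < ((x0 : ℝ) : EReal) := by
    refine lt_of_lt_of_le ha ?_
    have : ((0 : ℝ) : EReal) ≤ ((x0 : ℝ) : EReal) := EReal.coe_le_coe_iff.2 (by linarith)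
    simpa using this
  -- a point with large slope
  obtain ⟨x1, hx1a, hx1y⟩ := hdu_inada_top (y + 1)
  set f : ℝ → ℝ := fun t => (u t).toReal with hf
  set B0 : ℝ := f x0 - du x0 * x0 with hB0
  set B1 : ℝ := f x1 - du x1 * x1 with hB1
  have hbound : Phi y ≤ ((max B0 B1 : ℝ) : EReal) := by
    rw [hPhi]
    refine iSup_le fun z => ?_
    rcases eq_or_ne (u z) ⊥ with hbot | hne
    · rw [hbot]
      rw [EReal.bot_sub]
      exact bot_le
    have huz : u z = ((f z : ℝ) : EReal) := by
      rcases lt_trichotomy ((z : ℝ) : EReal) a with h | h | h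
      · exact absurd (hu_bot z h) hne
      · exact (EReal.coe_toReal (hu_ne_top z) hne).symm
      · exact (EReal.coe_toReal (hu_ne_top z) (hu_fin z h)).symm
    rw [huz, ← EReal.coe_sub]
    refine EReal.coe_le_coe_iff.2 ?_
    have h0 := u_tangent hu_ne_top hu_bot hu_fin hu_mono hdu hdu_pos hdu_anti x0 hx0a z
    have h1 := u_tangent hu_ne_top hu_bot hu_fin hu_mono hdu hdu_pos hdu_anti x1 hx1a z
    rw [huz] at h0 h1
    have h0' : f z ≤ f x0 + du x0 * (z - x0) := EReal.coe_le_coe_iff.1 h0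
    have h1' : f z ≤ f x1 + du x1 * (z - x1) := EReal.coe_le_coe_iff.1 h1
    rcases le_total 0 z with hz | hz
    · refine le_max_of_le_left ?_
      nlinarith [hx0y, hz, h0']
    · refine le_max_of_le_right ?_
      nlinarith [hx1y, hz, h1']
  exact fun h => EReal.coe_ne_top _ (top_le_iff.1 (h ▸ hbound))

/-- attainment of the supremum at a point where `du x' = y`. -/
lemma Phi_attain
    (hu_ne_top : ∀ x : ℝ, u x ≠ ⊤)
    (hu_bot : ∀ x : ℝ, (x : EReal) < a → u x = ⊥)
    (hu_fin : ∀ x : ℝ, a < (x : EReal) → u x ≠ ⊥)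
    (hu_mono : Monotone u)
    (hdu : ∀ x : ℝ, a < (x : EReal) → HasDerivAt (fun t : ℝ => (u t).toReal) (du x) x)
    (hdu_pos : ∀ x : ℝ, a < (x : EReal) → 0 < du x)
    (hdu_anti : StrictAntiOn du {x : ℝ | a < (x : EReal)})
    (hPhi : ∀ y : ℝ, Phi y = ⨆ x : ℝ, (u x - ((x * y : ℝ) : EReal)))
    (x' : ℝ) (hx' : a < (x' : EReal)) :
    Phi (du x') = (((u x').toReal - x' * du x' : ℝ) : EReal) := by
  set f : ℝ → ℝ := fun t => (u t).toReal with hf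
  refine le_antisymm ?_ ?_
  · rw [hPhi]
    refine iSup_le fun z => ?_
    have h0 := u_tangent hu_ne_top hu_bot hu_fin hu_mono hdu hdu_pos hdu_anti x' hx' z
    calc u z - ((z * du x' : ℝ) : EReal)
        ≤ ((f x' + du x' * (z - x') : ℝ) : EReal) - ((z * du x' : ℝ) : EReal) := by
          exact EReal.sub_le_sub h0 le_rfl
      _ = ((f x' - x' * du x' : ℝ) : EReal) := by
          rw [← EReal.coe_sub]
          norm_cast
          ring
  · rw [hPhi]
    have h := le_iSup (fun x : ℝ => u x - ((x * du x' : ℝ) : EReal)) x'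
    have huz : u x' = ((f x' : ℝ) : EReal) :=
      (EReal.coe_toReal (hu_ne_top x') (hu_fin x' hx')).symm
    calc (((u x').toReal - x' * du x' : ℝ) : EReal)
        = u x' - ((x' * du x' : ℝ) : EReal) := by rw [huz, ← EReal.coe_sub]; norm_cast
      _ ≤ _ := h

/-- `Phi` of a convex combination is at most the max. -/
lemma Phi_mid_le_max
    (hu_ne_top : ∀ x : ℝ, u x ≠ ⊤)
    (ha : a < 0)
    (hu_fin : ∀ x : ℝ, a < (x : EReal) → u x ≠ ⊥)
    (hPhi : ∀ y : ℝ, Phi y = ⨆ x : ℝ, (u x - ((x * y : ℝ) : EReal)))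
    (y1 y0 x : ℝ) (hx0 : 0 ≤ x) (hx1 : x ≤ 1) :
    Phi (x * y1 + (1 - x) * y0) ≤ max (Phi y1) (Phi y0) := by
  rw [hPhi]
  refine iSup_le fun z => ?_
  rcases eq_or_ne (u z) ⊥ with hbot | hne
  · rw [hbot, EReal.bot_sub]; exact bot_le
  have huz : u z = (((u z).toReal : ℝ) : EReal) := (EReal.coe_toReal (hu_ne_top z) hne).symm
  set fz : ℝ := (u z).toReal with hfz
  have ht1 : ((fz - z * y1 : ℝ) : EReal) ≤ Phi y1 := by
    rw [hPhi]
    have h := le_iSup (fun x : ℝ => u x - ((x * y1 : ℝ) : EReal)) z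
    rw [huz, ← EReal.coe_sub] at h
    exact h
  have ht0 : ((fz - z * y0 : ℝ) : EReal) ≤ Phi y0 := by
    rw [hPhi]
    have h := le_iSup (fun x : ℝ => u x - ((x * y0 : ℝ) : EReal)) z
    rw [huz, ← EReal.coe_sub] at h
    exact h
  set M : EReal := max (Phi y1) (Phi y0) with hM
  rcases eq_or_ne M ⊤ with hMtop | hMne
  · rw [hMtop]; exact le_top
  have hMne_bot : M ≠ ⊥ := by
    intro h
    have := le_max_left (Phi y1) (Phi y0)
    rw [← hM, h, le_bot_iff] at this
    exact Phi_ne_bot ha hu_fin hPhi y1 this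
  have hMr : M = ((M.toReal : ℝ) : EReal) := (EReal.coe_toReal hMne hMne_bot).symm
  have h1' : fz - z * y1 ≤ M.toReal := by
    have := ht1.trans (le_max_left (Phi y1) (Phi y0))
    rw [← hM, hMr] at this
    exact EReal.coe_le_coe_iff.1 this
  have h0' : fz - z * y0 ≤ M.toReal := by
    have := ht0.trans (le_max_right (Phi y1) (Phi y0))
    rw [← hM, hMr] at this
    exact EReal.coe_le_coe_iff.1 this
  calc u z - ((z * (x * y1 + (1 - x) * y0) : ℝ) : EReal)
      = ((fz - z * (x * y1 + (1 - x) * y0) : ℝ) : EReal) := by rw [huz, ← EReal.coe_sub]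
    _ ≤ ((M.toReal : ℝ) : EReal) := by
        refine EReal.coe_le_coe_iff.2 ?_
        nlinarith [h1', h0']
    _ = M := hMr.symm


/-- convex-combination inequality for `Phi`, real-valued form. -/
lemma Phi_convex_combo
    (hu_ne_top : ∀ x : ℝ, u x ≠ ⊤)
    (ha : a < 0)
    (hu_fin : ∀ x : ℝ, a < (x : EReal) → u x ≠ ⊥)
    (hPhi : ∀ y : ℝ, Phi y = ⨆ x : ℝ, (u x - ((x * y : ℝ) : EReal)))
    (y1 y0 x : ℝ) (hx0 : 0 ≤ x) (hx1 : x ≤ 1) (h1top : Phi y1 ≠ ⊤) (h0top : Phi y0 ≠ ⊤) :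
    Phi (x * y1 + (1 - x) * y0)
      ≤ ((x * (Phi y1).toReal + (1 - x) * (Phi y0).toReal : ℝ) : EReal) := by
  rw [hPhi]
  refine iSup_le fun z => ?_
  rcases eq_or_ne (u z) ⊥ with hbot | hne
  · rw [hbot, EReal.bot_sub]; exact bot_le
  have huz : u z = (((u z).toReal : ℝ) : EReal) := (EReal.coe_toReal (hu_ne_top z) hne).symm
  set fz : ℝ := (u z).toReal with hfz
  have ht1 : fz - z * y1 ≤ (Phi y1).toReal := by
    have h : ((fz - z * y1 : ℝ) : EReal) ≤ Phi y1 := by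
      rw [hPhi]
      have h := le_iSup (fun x : ℝ => u x - ((x * y1 : ℝ) : EReal)) z
      rw [huz, ← EReal.coe_sub] at h
      exact h
    have := EReal.coe_toReal h1top (Phi_ne_bot ha hu_fin hPhi y1)
    rw [← this] at h
    exact EReal.coe_le_coe_iff.1 h
  have ht0 : fz - z * y0 ≤ (Phi y0).toReal := by
    have h : ((fz - z * y0 : ℝ) : EReal) ≤ Phi y0 := by
      rw [hPhi]
      have h := le_iSup (fun x : ℝ => u x - ((x * y0 : ℝ) : EReal)) z
      rw [huz, ← EReal.coe_sub] at h
      exact h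
    have := EReal.coe_toReal h0top (Phi_ne_bot ha hu_fin hPhi y0)
    rw [← this] at h
    exact EReal.coe_le_coe_iff.1 h
  calc u z - ((z * (x * y1 + (1 - x) * y0) : ℝ) : EReal)
      = ((fz - z * (x * y1 + (1 - x) * y0) : ℝ) : EReal) := by rw [huz, ← EReal.coe_sub]
    _ ≤ _ := by
        refine EReal.coe_le_coe_iff.2 ?_
        nlinarith [mul_le_mul_of_nonneg_left ht1 hx0,
          mul_le_mul_of_nonneg_left ht0 (by linarith : (0:ℝ) ≤ 1 - x)]

lemma Phi_convex_real
    (hu_ne_top : ∀ x : ℝ, u x ≠ ⊤)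
    (ha : a < 0)
    (hu_fin : ∀ x : ℝ, a < (x : EReal) → u x ≠ ⊥)
    (hPhi : ∀ y : ℝ, Phi y = ⨆ x : ℝ, (u x - ((x * y : ℝ) : EReal)))
    (y1 y0 x : ℝ) (hx0 : 0 ≤ x) (hx1 : x ≤ 1) (h1top : Phi y1 ≠ ⊤) (h0top : Phi y0 ≠ ⊤) :
    (Phi (x * y1 + (1 - x) * y0)).toReal
      ≤ x * (Phi y1).toReal + (1 - x) * (Phi y0).toReal := by
  have h := Phi_convex_combo hu_ne_top ha hu_fin hPhi y1 y0 x hx0 hx1 h1top h0top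
  have hb := Phi_ne_bot ha hu_fin hPhi (x * y1 + (1 - x) * y0)
  have := EReal.toReal_le_toReal h hb (EReal.coe_ne_top _)
  rwa [EReal.toReal_coe] at this

/-- three-point convexity inequality. -/
lemma Phi_conv3
    (hu_ne_top : ∀ x : ℝ, u x ≠ ⊤)
    (ha : a < 0)
    (hu_fin : ∀ x : ℝ, a < (x : EReal) → u x ≠ ⊥)
    (hPhi : ∀ y : ℝ, Phi y = ⨆ x : ℝ, (u x - ((x * y : ℝ) : EReal)))
    (p q r : ℝ) (hpq : p < q) (hqr : q < r) (hptop : Phi p ≠ ⊤) (hrtop : Phi r ≠ ⊤) :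
    (r - p) * (Phi q).toReal ≤ (r - q) * (Phi p).toReal + (q - p) * (Phi r).toReal := by
  have hrp : (0:ℝ) < r - p := by linarith
  set x : ℝ := (r - q) / (r - p) with hx
  have hx0 : 0 ≤ x := div_nonneg (by linarith) hrp.le
  have hx1 : x ≤ 1 := by
    rw [hx, div_le_one hrp]; linarith
  have hmid : x * p + (1 - x) * r = q := by
    rw [hx]; field_simp; ring
  have hcx := Phi_convex_real hu_ne_top ha hu_fin hPhi p r x hx0 hx1 hptop hrtop
  rw [hmid] at hcx
  have e1 : x * (r - p) = r - q := by rw [hx]; field_simp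
  have e2 : (1 - x) * (r - p) = q - p := by
    have : x * (r - p) = r - q := e1
    nlinarith [this]
  calc (r - p) * (Phi q).toReal
      ≤ (r - p) * (x * (Phi p).toReal + (1 - x) * (Phi r).toReal) :=
        mul_le_mul_of_nonneg_left hcx hrp.le
    _ = (x * (r - p)) * (Phi p).toReal + ((1 - x) * (r - p)) * (Phi r).toReal := by ring
    _ = (r - q) * (Phi p).toReal + (q - p) * (Phi r).toReal := by rw [e1, e2]

lemma Phi_slope_shared_left
    (hu_ne_top : ∀ x : ℝ, u x ≠ ⊤)
    (ha : a < 0)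
    (hu_fin : ∀ x : ℝ, a < (x : EReal) → u x ≠ ⊥)
    (hPhi : ∀ y : ℝ, Phi y = ⨆ x : ℝ, (u x - ((x * y : ℝ) : EReal)))
    (p q r : ℝ) (hpq : p < q) (hqr : q < r) (hptop : Phi p ≠ ⊤) (hrtop : Phi r ≠ ⊤) :
    ((Phi q).toReal - (Phi p).toReal) / (q - p)
      ≤ ((Phi r).toReal - (Phi p).toReal) / (r - p) := by
  have h3 := Phi_conv3 hu_ne_top ha hu_fin hPhi p q r hpq hqr hptop hrtop
  rw [div_le_div_iff₀ (by linarith) (by linarith)]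
  nlinarith [h3]

lemma Phi_slope_shared_right
    (hu_ne_top : ∀ x : ℝ, u x ≠ ⊤)
    (ha : a < 0)
    (hu_fin : ∀ x : ℝ, a < (x : EReal) → u x ≠ ⊥)
    (hPhi : ∀ y : ℝ, Phi y = ⨆ x : ℝ, (u x - ((x * y : ℝ) : EReal)))
    (p q r : ℝ) (hpq : p < q) (hqr : q < r) (hptop : Phi p ≠ ⊤) (hrtop : Phi r ≠ ⊤) :
    ((Phi r).toReal - (Phi p).toReal) / (r - p)
      ≤ ((Phi r).toReal - (Phi q).toReal) / (r - q) := by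
  have h3 := Phi_conv3 hu_ne_top ha hu_fin hPhi p q r hpq hqr hptop hrtop
  rw [div_le_div_iff₀ (by linarith) (by linarith)]
  nlinarith [h3]

lemma DPhi_le_slope
    (hu_ne_top : ∀ x : ℝ, u x ≠ ⊤)
    (ha : a < 0)
    (hu_fin : ∀ x : ℝ, a < (x : EReal) → u x ≠ ⊥)
    (hPhi : ∀ y : ℝ, Phi y = ⨆ x : ℝ, (u x - ((x * y : ℝ) : EReal)))
    (hPhiTop : ∀ y : ℝ, 0 < y → Phi y ≠ ⊤)
    (hDPhi : ∀ y : ℝ, 0 < y → HasDerivAt (fun t : ℝ => (Phi t).toReal) (DPhi y) y)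
    (y r : ℝ) (hy : 0 < y) (hyr : y < r) :
    DPhi y ≤ ((Phi r).toReal - (Phi y).toReal) / (r - y) := by
  have hd := (hDPhi y hy)
  rw [hasDerivAt_iff_tendsto_slope] at hd
  have hd' : Tendsto (slope (fun t : ℝ => (Phi t).toReal) y) (𝓝[>] y) (𝓝 (DPhi y)) :=
    hd.mono_left (nhdsWithin_mono y fun t ht => ht.ne')
  refine le_of_tendsto hd' ?_
  filter_upwards [Ioo_mem_nhdsGT_of_mem ⟨le_refl y, hyr⟩] with m hm
  have := Phi_slope_shared_left hu_ne_top ha hu_fin hPhi y m r hm.1 hm.2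
    (hPhiTop y hy) (hPhiTop r (hy.trans hyr))
  rw [slope_def_field]
  exact this

lemma slope_le_DPhi
    (hu_ne_top : ∀ x : ℝ, u x ≠ ⊤)
    (ha : a < 0)
    (hu_fin : ∀ x : ℝ, a < (x : EReal) → u x ≠ ⊥)
    (hPhi : ∀ y : ℝ, Phi y = ⨆ x : ℝ, (u x - ((x * y : ℝ) : EReal)))
    (hPhiTop : ∀ y : ℝ, 0 < y → Phi y ≠ ⊤)
    (hDPhi : ∀ y : ℝ, 0 < y → HasDerivAt (fun t : ℝ => (Phi t).toReal) (DPhi y) y)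
    (p y : ℝ) (hpy : p < y) (hy : 0 < y) (hptop : Phi p ≠ ⊤) :
    ((Phi y).toReal - (Phi p).toReal) / (y - p) ≤ DPhi y := by
  have hd := (hDPhi y hy)
  rw [hasDerivAt_iff_tendsto_slope] at hd
  have hd' : Tendsto (slope (fun t : ℝ => (Phi t).toReal) y) (𝓝[<] y) (𝓝 (DPhi y)) :=
    hd.mono_left (nhdsWithin_mono y fun t ht => ne_of_lt ht)
  refine ge_of_tendsto hd' ?_
  filter_upwards [Ioo_mem_nhdsLT_of_mem ⟨hpy, le_refl y⟩] with m hm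
  have := Phi_slope_shared_right hu_ne_top ha hu_fin hPhi p m y hm.1 hm.2
    hptop (hPhiTop y hy)
  rw [slope_comm, slope_def_field]
  exact this


lemma DPhi_small
    (hu_ne_top : ∀ x : ℝ, u x ≠ ⊤)
    (hu_bot : ∀ x : ℝ, (x : EReal) < a → u x = ⊥)
    (hu_fin : ∀ x : ℝ, a < (x : EReal) → u x ≠ ⊥)
    (hu_mono : Monotone u)
    (hdu : ∀ x : ℝ, a < (x : EReal) → HasDerivAt (fun t : ℝ => (u t).toReal) (du x) x)
    (hdu_pos : ∀ x : ℝ, a < (x : EReal) → 0 < du x)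
    (hdu_anti : StrictAntiOn du {x : ℝ | a < (x : EReal)})
    (ha : a < 0)
    (hPhi : ∀ y : ℝ, Phi y = ⨆ x : ℝ, (u x - ((x * y : ℝ) : EReal)))
    (hPhiTop : ∀ y : ℝ, 0 < y → Phi y ≠ ⊤)
    (hDPhi : ∀ y : ℝ, 0 < y → HasDerivAt (fun t : ℝ => (Phi t).toReal) (DPhi y) y)
    (X : ℝ) :
    ∃ δ : ℝ, 0 < δ ∧ ∀ y : ℝ, 0 < y → y < δ → DPhi y ≤ -X := by
  set x' : ℝ := max X 1 with hx'
  have hx'a : a < ((x' : ℝ) : EReal) := by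
    refine lt_trans ha ?_
    have h1 : (0:ℝ) < x' := lt_of_lt_of_le one_pos (le_max_right X 1)
    exact_mod_cast h1
  set δ : ℝ := du x' with hδ
  have hδ0 : 0 < δ := hdu_pos x' hx'a
  refine ⟨δ, hδ0, fun y hy hyδ => ?_⟩
  have h1 := DPhi_le_slope hu_ne_top ha hu_fin hPhi hPhiTop hDPhi y δ hy hyδ
  have hattain := Phi_attain hu_ne_top hu_bot hu_fin hu_mono hdu hdu_pos hdu_anti hPhi x' hx'a
  have hPhiδ : (Phi δ).toReal = (u x').toReal - x' * δ := by
    rw [hδ, hattain]; exact EReal.toReal_coe _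
  have hPhiy_ge : (u x').toReal - x' * y ≤ (Phi y).toReal := by
    have hterm : (((u x').toReal - x' * y : ℝ) : EReal) ≤ Phi y := by
      rw [hPhi]
      have h := le_iSup (fun x : ℝ => u x - ((x * y : ℝ) : EReal)) x'
      have huz : u x' = (((u x').toReal : ℝ) : EReal) :=
        (EReal.coe_toReal (hu_ne_top x') (hu_fin x' hx'a)).symm
      rw [huz, ← EReal.coe_sub] at h
      exact h
    have hco := EReal.coe_toReal (hPhiTop y hy) (Phi_ne_bot ha hu_fin hPhi y)
    rw [← hco] at hterm
    exact EReal.coe_le_coe_iff.1 hterm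
  have hnum : (Phi δ).toReal - (Phi y).toReal ≤ -x' * (δ - y) := by
    rw [hPhiδ]
    nlinarith [hPhiy_ge]
  have hden : (0:ℝ) < δ - y := by linarith
  calc DPhi y ≤ ((Phi δ).toReal - (Phi y).toReal) / (δ - y) := h1
    _ ≤ -x' := by
        rw [div_le_iff₀ hden]
        nlinarith [hnum]
    _ ≤ -X := by
        have : X ≤ x' := le_max_left X 1
        linarith

/-- rational-indexed representation of `Phi` for nonnegative arguments. -/
lemma Phi_rat_rep
    (hu_ne_top : ∀ x : ℝ, u x ≠ ⊤)
    (hu_bot : ∀ x : ℝ, (x : EReal) < a → u x = ⊥)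
    (hu_fin : ∀ x : ℝ, a < (x : EReal) → u x ≠ ⊥)
    (hu_mono : Monotone u)
    (hdu : ∀ x : ℝ, a < (x : EReal) → HasDerivAt (fun t : ℝ => (u t).toReal) (du x) x)
    (hPhi : ∀ y : ℝ, Phi y = ⨆ x : ℝ, (u x - ((x * y : ℝ) : EReal)))
    (y : ℝ) (hy : 0 ≤ y) :
    Phi y = ⨆ q : ℚ, (if a < (((q : ℝ)) : EReal)
      then (((u (q : ℝ)).toReal - (q : ℝ) * y : ℝ) : EReal) else ⊥) := by
  refine le_antisymm ?_ ?_
  · rw [hPhi]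
    refine iSup_le fun x => ?_
    rcases lt_trichotomy ((x : ℝ) : EReal) a with hxa | hxa | hxa
    · rw [hu_bot x hxa, EReal.bot_sub]; exact bot_le
    · -- x = a
      rcases eq_or_ne (u x) ⊥ with hbot | hne
      · rw [hbot, EReal.bot_sub]; exact bot_le
      have hux : u x = (((u x).toReal : ℝ) : EReal) :=
        (EReal.coe_toReal (hu_ne_top x) hne).symm
      rw [hux, ← EReal.coe_sub]
      refine EReal.coe_le_of_forall_sub fun ε hε => ?_
      have hstep : 0 < ε / (y + 1) := div_pos hε (by linarith)
      obtain ⟨q, hq1, hq2⟩ := exists_rat_btwn (lt_add_of_pos_right x hstep)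
      have hqa : a < (((q : ℝ)) : EReal) := by
        rw [← hxa]; exact_mod_cast hq1
      have hterm : (((u (q:ℝ)).toReal - (q:ℝ) * y : ℝ) : EReal)
          ≤ ⨆ q : ℚ, (if a < (((q : ℝ)) : EReal)
            then (((u (q : ℝ)).toReal - (q : ℝ) * y : ℝ) : EReal) else ⊥) := by
        have := le_iSup (fun q : ℚ => (if a < (((q : ℝ)) : EReal)
          then (((u (q : ℝ)).toReal - (q : ℝ) * y : ℝ) : EReal) else ⊥)) q
        rwa [if_pos hqa] at this
      refine le_trans ?_ hterm
      refine EReal.coe_le_coe_iff.2 ?_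
      have hmono' : (u x).toReal ≤ (u (q:ℝ)).toReal := by
        refine EReal.toReal_le_toReal (hu_mono hq1.le) hne (hu_ne_top _)
      have : ((q:ℝ) - x) * y < ε := by
        have h1 : (q:ℝ) - x < ε / (y + 1) := by linarith
        have h2 : 0 ≤ (q:ℝ) - x := by linarith
        calc ((q:ℝ) - x) * y ≤ ((q:ℝ) - x) * (y + 1) := by nlinarith
          _ < (ε / (y + 1)) * (y + 1) := by
              refine mul_lt_mul_of_pos_right h1 (by linarith)
          _ = ε := by field_simp
      nlinarith [hmono', this]
    · -- a < x
      have hux : u x = (((u x).toReal : ℝ) : EReal) :=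
        (EReal.coe_toReal (hu_ne_top x) (hu_fin x hxa)).symm
      rw [hux, ← EReal.coe_sub]
      refine EReal.coe_le_of_forall_sub fun ε hε => ?_
      have hcont : ContinuousAt (fun t : ℝ => (u t).toReal - t * y) x := by
        exact ((hdu x hxa).continuousAt).sub ((continuous_id.mul continuous_const).continuousAt)
      have hev : ∀ᶠ t in 𝓝 x, (u x).toReal - x * y - ε < (u t).toReal - t * y :=
        hcont.eventually (eventually_gt_nhds
          (by show (u x).toReal - x * y - ε < (u x).toReal - x * y; linarith))
      obtain ⟨δ', hδ'pos, hball⟩ := Metric.eventually_nhds_iff.1 hev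
      obtain ⟨q, hq1, hq2⟩ := exists_rat_btwn (lt_add_of_pos_right x (by positivity : (0:ℝ) < δ'/2))
      have hqd : dist (q:ℝ) x < δ' := by
        rw [Real.dist_eq, abs_of_pos (by linarith : (0:ℝ) < (q:ℝ) - x)]
        linarith
      have hq := hball hqd
      have hqa : a < (((q : ℝ)) : EReal) := lt_trans hxa (by exact_mod_cast hq1)
      have hterm : (((u (q:ℝ)).toReal - (q:ℝ) * y : ℝ) : EReal)
          ≤ ⨆ q : ℚ, (if a < (((q : ℝ)) : EReal)
            then (((u (q : ℝ)).toReal - (q : ℝ) * y : ℝ) : EReal) else ⊥) := by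
        have := le_iSup (fun q : ℚ => (if a < (((q : ℝ)) : EReal)
          then (((u (q : ℝ)).toReal - (q : ℝ) * y : ℝ) : EReal) else ⊥)) q
        rwa [if_pos hqa] at this
      refine le_trans ?_ hterm
      exact EReal.coe_le_coe_iff.2 (le_of_lt hq)
  · refine iSup_le fun q => ?_
    by_cases hqa : a < (((q : ℝ)) : EReal)
    · rw [if_pos hqa, hPhi]
      have huz : u (q:ℝ) = (((u (q:ℝ)).toReal : ℝ) : EReal) :=
        (EReal.coe_toReal (hu_ne_top _) (hu_fin _ hqa)).symm
      have h := le_iSup (fun x : ℝ => u x - ((x * y : ℝ) : EReal)) (q : ℝ)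
      rw [huz, ← EReal.coe_sub] at h
      exact h
    · rw [if_neg hqa]; exact bot_le


lemma measurable_Phi_comp {Ω : Type*} [MeasurableSpace Ω]
    (hu_ne_top : ∀ x : ℝ, u x ≠ ⊤)
    (hu_bot : ∀ x : ℝ, (x : EReal) < a → u x = ⊥)
    (hu_fin : ∀ x : ℝ, a < (x : EReal) → u x ≠ ⊥)
    (hu_mono : Monotone u)
    (hdu : ∀ x : ℝ, a < (x : EReal) → HasDerivAt (fun t : ℝ => (u t).toReal) (du x) x)
    (hPhi : ∀ y : ℝ, Phi y = ⨆ x : ℝ, (u x - ((x * y : ℝ) : EReal)))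
    {g : Ω → ℝ} (hg : Measurable g) (h0 : ∀ ω, 0 ≤ g ω) :
    Measurable fun ω => Phi (g ω) := by
  have hrep : (fun ω => Phi (g ω)) = fun ω => ⨆ q : ℚ,
      (if a < (((q : ℝ)) : EReal)
        then (((u (q : ℝ)).toReal - (q : ℝ) * g ω : ℝ) : EReal) else ⊥) := by
    funext ω
    exact Phi_rat_rep hu_ne_top hu_bot hu_fin hu_mono hdu hPhi (g ω) (h0 ω)
  rw [hrep]
  refine Measurable.iSup fun q => ?_
  by_cases hqa : a < (((q : ℝ)) : EReal)
  · simp only [if_pos hqa]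
    exact measurable_coe_real_ereal.comp (measurable_const.sub (hg.const_mul _))
  · simp only [if_neg hqa]; exact measurable_const


/-- monotonicity in `x` of the difference quotient. -/
lemma q_mono
    (hu_ne_top : ∀ x : ℝ, u x ≠ ⊤)
    (ha : a < 0)
    (hu_fin : ∀ x : ℝ, a < (x : EReal) → u x ≠ ⊥)
    (hPhi : ∀ y : ℝ, Phi y = ⨆ x : ℝ, (u x - ((x * y : ℝ) : EReal)))
    (hPhiTop : ∀ y : ℝ, 0 < y → Phi y ≠ ⊤)
    (y1 y0 : ℝ) (h1 : 0 ≤ y1) (h0 : 0 ≤ y0) (h1top : Phi y1 ≠ ⊤)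
    (x x' : ℝ) (hx : 1/2 ≤ x) (hxx' : x ≤ x') (hx' : x' < 1) :
    ((Phi y1).toReal - (Phi (x * y1 + (1 - x) * y0)).toReal) / (1 - x)
      ≤ ((Phi y1).toReal - (Phi (x' * y1 + (1 - x') * y0)).toReal) / (1 - x') := by
  rcases eq_or_lt_of_le hxx' with rfl | hlt
  · exact le_refl _
  have h1x : (0:ℝ) < 1 - x := by linarith
  have h1x' : (0:ℝ) < 1 - x' := by linarith
  rcases lt_trichotomy y1 y0 with hcmp | hcmp | hcmp
  · -- y1 < y0
    set d : ℝ := y0 - y1 with hd_def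
    have hd : 0 < d := by rw [hd_def]; linarith
    set s : ℝ := (1 - x) * d with hs_def
    set s' : ℝ := (1 - x') * d with hs'_def
    have hs : 0 < s := mul_pos h1x hd
    have hs' : 0 < s' := mul_pos h1x' hd
    have hss' : s' < s := by
      rw [hs_def, hs'_def]
      exact mul_lt_mul_of_pos_right (by linarith) hd
    have hm : x * y1 + (1 - x) * y0 = y1 + s := by rw [hs_def, hd_def]; ring
    have hm' : x' * y1 + (1 - x') * y0 = y1 + s' := by rw [hs'_def, hd_def]; ring
    rw [hm, hm']
    have hslope := Phi_slope_shared_left hu_ne_top ha hu_fin hPhi y1 (y1 + s') (y1 + s)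
      (by linarith) (by linarith) h1top (hPhiTop (y1 + s) (by linarith))
    simp only [add_sub_cancel_left] at hslope
    rw [div_le_div_iff₀ hs' hs] at hslope
    set A : ℝ := (Phi y1).toReal
    set B : ℝ := (Phi (y1 + s)).toReal
    set B' : ℝ := (Phi (y1 + s')).toReal
    have hcancel : (B' - A) * (1 - x) ≤ (B - A) * (1 - x') := by
      have hkey : ((B' - A) * (1 - x)) * d ≤ ((B - A) * (1 - x')) * d := by
        calc ((B' - A) * (1 - x)) * d = (B' - A) * s := by rw [hs_def]; ring
          _ ≤ (B - A) * s' := hslope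
          _ = ((B - A) * (1 - x')) * d := by rw [hs'_def]; ring
      exact le_of_mul_le_mul_right hkey hd
    rw [div_le_div_iff₀ h1x h1x']
    nlinarith [hcancel]
  · -- y1 = y0
    have hm : x * y1 + (1 - x) * y0 = y1 := by rw [← hcmp]; ring
    have hm' : x' * y1 + (1 - x') * y0 = y1 := by rw [← hcmp]; ring
    rw [hm, hm', sub_self, zero_div, zero_div]
  · -- y0 < y1
    have hy1pos : 0 < y1 := lt_of_le_of_lt h0 hcmp
    set c : ℝ := y1 - y0 with hc_def
    have hc : 0 < c := by rw [hc_def]; linarith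
    set m : ℝ := x * y1 + (1 - x) * y0 with hm_def
    set m' : ℝ := x' * y1 + (1 - x') * y0 with hm'_def
    have hmpos : 0 < m := by
      rw [hm_def]
      have : 0 < x * y1 := mul_pos (by linarith) hy1pos
      nlinarith [mul_nonneg h1x.le h0]
    have hm_lt : m < m' := by
      rw [hm_def, hm'_def]
      nlinarith [hc, hlt]
    have hm'_lt : m' < y1 := by
      rw [hm'_def]
      nlinarith [hc, h1x']
    have he : y1 - m = (1 - x) * c := by rw [hm_def, hc_def]; ring
    have he' : y1 - m' = (1 - x') * c := by rw [hm'_def, hc_def]; ring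
    have hslope := Phi_slope_shared_right hu_ne_top ha hu_fin hPhi m m' y1
      hm_lt hm'_lt (hPhiTop m hmpos) h1top
    rw [div_le_div_iff₀ (by linarith) (by linarith)] at hslope
    set A : ℝ := (Phi y1).toReal
    set B : ℝ := (Phi m).toReal
    set B' : ℝ := (Phi m').toReal
    have hcancel : (A - B) * (1 - x') ≤ (A - B') * (1 - x) := by
      have hkey : ((A - B) * (1 - x')) * c ≤ ((A - B') * (1 - x)) * c := by
        calc ((A - B) * (1 - x')) * c = (A - B) * (y1 - m') := by rw [he']; ring
          _ ≤ (A - B') * (y1 - m) := hslope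
          _ = ((A - B') * (1 - x)) * c := by rw [he]; ring
      exact le_of_mul_le_mul_right hkey hc
    rw [div_le_div_iff₀ h1x h1x']
    nlinarith [hcancel]

/-- the limit of the difference quotient as `x ↑ 1`. -/
lemma q_tendsto
    (hu_ne_top : ∀ x : ℝ, u x ≠ ⊤)
    (hu_bot : ∀ x : ℝ, (x : EReal) < a → u x = ⊥)
    (hu_fin : ∀ x : ℝ, a < (x : EReal) → u x ≠ ⊥)
    (hu_mono : Monotone u)
    (hdu : ∀ x : ℝ, a < (x : EReal) → HasDerivAt (fun t : ℝ => (u t).toReal) (du x) x)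
    (hdu_pos : ∀ x : ℝ, a < (x : EReal) → 0 < du x)
    (hdu_anti : StrictAntiOn du {x : ℝ | a < (x : EReal)})
    (ha : a < 0)
    (hPhi : ∀ y : ℝ, Phi y = ⨆ x : ℝ, (u x - ((x * y : ℝ) : EReal)))
    (hPhiTop : ∀ y : ℝ, 0 < y → Phi y ≠ ⊤)
    (hDPhi : ∀ y : ℝ, 0 < y → HasDerivAt (fun t : ℝ => (Phi t).toReal) (DPhi y) y)
    (y1 y0 : ℝ) (h1 : 0 ≤ y1) (h0 : 0 ≤ y0) (h1top : Phi y1 ≠ ⊤) :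
    Tendsto (fun x : ℝ =>
        ((((Phi y1).toReal - (Phi (x * y1 + (1 - x) * y0)).toReal) / (1 - x) : ℝ) : EReal))
      (𝓝[<] (1 : ℝ))
      (𝓝 (if y1 = 0 then (if y0 = 0 then 0 else ⊤)
        else ((DPhi y1 * (y1 - y0) : ℝ) : EReal))) := by
  by_cases hy1 : y1 = 0
  · subst hy1
    by_cases hy0 : y0 = 0
    · subst hy0
      simp only [if_pos rfl]
      have harg : ∀ x : ℝ, x * 0 + (1 - x) * 0 = 0 := fun x => by ring
      have : (fun x : ℝ =>
          ((((Phi 0).toReal - (Phi (x * 0 + (1 - x) * 0)).toReal) / (1 - x) : ℝ) : EReal))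
          = fun x : ℝ => ((0 : ℝ) : EReal) := by
        funext x
        rw [harg x, sub_self, zero_div]
      rw [this]
      simp only [EReal.coe_zero]
      exact tendsto_const_nhds
    · have hy0pos : 0 < y0 := lt_of_le_of_ne h0 (Ne.symm hy0)
      simp only [eq_self_iff_true, if_true, if_neg hy0]
      rw [EReal.tendsto_nhds_top_iff_real]
      intro X
      obtain ⟨δ, hδ0, hδ⟩ := DPhi_small hu_ne_top hu_bot hu_fin hu_mono hdu hdu_pos hdu_anti
        ha hPhi hPhiTop hDPhi ((|X| + 1) / y0)
      have hlb : max (1 - δ / y0) (1/2) < 1 := by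
        refine max_lt ?_ (by norm_num)
        have : 0 < δ / y0 := div_pos hδ0 hy0pos
        linarith
      filter_upwards [Ioo_mem_nhdsLT hlb] with x hx
      have hx1 : x < 1 := hx.2
      have h1x : (0:ℝ) < 1 - x := by linarith
      set s : ℝ := (1 - x) * y0 with hs_def
      have hs0 : 0 < s := mul_pos h1x hy0pos
      have hsδ : s < δ := by
        have hxlb : 1 - δ / y0 < x := lt_of_le_of_lt (le_max_left _ _) hx.1
        rw [hs_def]
        have : 1 - x < δ / y0 := by linarith
        calc (1 - x) * y0 < (δ / y0) * y0 := mul_lt_mul_of_pos_right this hy0pos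
          _ = δ := by field_simp
      have hD := hδ s hs0 hsδ
      have hsl := slope_le_DPhi hu_ne_top ha hu_fin hPhi hPhiTop hDPhi 0 s hs0 hs0 h1top
      rw [sub_zero] at hsl
      have harg : x * 0 + (1 - x) * y0 = s := by rw [hs_def]; ring
      rw [harg]
      have hnum : (Phi 0).toReal - (Phi s).toReal ≥ (|X| + 1) * (1 - x) := by
        have h2 : ((Phi s).toReal - (Phi 0).toReal) / s ≤ -((|X| + 1) / y0) := le_trans hsl hD
        rw [div_le_iff₀ hs0] at h2
        have h3 : -((|X| + 1) / y0) * s = -((|X| + 1) * (1 - x)) := by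
          rw [hs_def]; field_simp
        rw [h3] at h2
        linarith
      refine EReal.coe_lt_coe_iff.2 ?_
      rw [lt_div_iff₀ h1x]
      nlinarith [le_abs_self X, hnum, h1x]
  · -- y1 > 0 : the derivative case
    have hy1pos : 0 < y1 := lt_of_le_of_ne h1 (Ne.symm hy1)
    simp only [if_neg hy1]
    set inner : ℝ → ℝ := fun x => x * y1 + (1 - x) * y0 with hinner
    have hinner1 : inner 1 = y1 := by rw [hinner]; simp
    have hdin : HasDerivAt inner (y1 - y0) 1 := by
      have h : HasDerivAt (fun x : ℝ => x * (y1 - y0) + y0) (y1 - y0) 1 := by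
        simpa using ((hasDerivAt_id (1:ℝ)).mul_const (y1 - y0)).add_const y0
      refine h.congr_of_eventuallyEq (Eventually.of_forall fun x => ?_)
      rw [hinner]; ring
    have hout : HasDerivAt (fun t : ℝ => (Phi t).toReal) (DPhi y1) (inner 1) := by
      rw [hinner1]; exact hDPhi y1 hy1pos
    have hcomp : HasDerivAt (fun x : ℝ => (Phi (inner x)).toReal) (DPhi y1 * (y1 - y0)) 1 :=
      hout.comp 1 hdin
    rw [hasDerivAt_iff_tendsto_slope] at hcomp
    have hcomp' : Tendsto (slope (fun x : ℝ => (Phi (inner x)).toReal) 1) (𝓝[<] (1:ℝ))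
        (𝓝 (DPhi y1 * (y1 - y0))) :=
      hcomp.mono_left (nhdsWithin_mono 1 fun t ht => ne_of_lt ht)
    have hcongr : ∀ᶠ x in 𝓝[<] (1:ℝ),
        slope (fun x : ℝ => (Phi (inner x)).toReal) 1 x
          = ((Phi y1).toReal - (Phi (x * y1 + (1 - x) * y0)).toReal) / (1 - x) := by
      filter_upwards [self_mem_nhdsWithin] with x hx
      have hx1 : x < 1 := mem_Iio.mp hx
      have hne1 : x - 1 ≠ 0 := by intro h; rw [sub_eq_zero] at h; exact absurd h (by linarith)
      have hne2 : (1:ℝ) - x ≠ 0 := by intro h; rw [sub_eq_zero] at h; exact absurd h (by linarith)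
      rw [slope_def_field, hinner1]
      show ((Phi (x * y1 + (1 - x) * y0)).toReal - (Phi y1).toReal) / (x - 1) = _
      field_simp
      ring
    have := hcomp'.congr' hcongr
    exact (EReal.tendsto_coe.2 this)

end PhiLayer
/-- differentiability step in the proof of Proposition 25.  Assume (A1),
(A2) and let `η⁰, η¹ ∈ L_Φ`, `η^x := x·η¹ + (1-x)·η⁰`.  Then (with `0·Φ'(0) := 0`):
`η¹·Φ'(η¹) ∈ L¹(P)`, `(η⁰·Φ'(η¹))⁺ ∈ L¹(P)`, and the left derivative at `x = 1` of
`x ↦ E[Φ(η^x)]` exists in `(-∞, +∞]` and equals `E[Φ'(η¹)·(η¹ - η⁰)]`. -/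
theorem statement15
    {Ω : Type*} [MeasurableSpace Ω] (P : Measure Ω) [IsProbabilityMeasure P]
    (a : EReal) (ha : a < 0)
    (u : ℝ → EReal)
    (hu_ne_top : ∀ x : ℝ, u x ≠ ⊤)
    (hu_bot : ∀ x : ℝ, (x : EReal) < a → u x = ⊥)
    (hu_fin : ∀ x : ℝ, a < (x : EReal) → u x ≠ ⊥)
    (hu_mono : Monotone u)
    (hu_lim : Tendsto u atBot (𝓝 ⊥))
    (du : ℝ → ℝ)
    (hdu : ∀ x : ℝ, a < (x : EReal) → HasDerivAt (fun t : ℝ => (u t).toReal) (du x) x)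
    (hdu_cont : ContinuousOn du {x : ℝ | a < (x : EReal)})
    (hdu_pos : ∀ x : ℝ, a < (x : EReal) → 0 < du x)
    (hdu_anti : StrictAntiOn du {x : ℝ | a < (x : EReal)})
    (hdu_inada_top : ∀ M : ℝ, ∃ x : ℝ, a < (x : EReal) ∧ M ≤ du x)
    (hdu_inada_zero : Tendsto du atTop (𝓝 0))
    (Phi : ℝ → EReal)
    (hPhi : ∀ y : ℝ, Phi y = ⨆ x : ℝ, (u x - ((x * y : ℝ) : EReal)))
    (hA2 : ∀ g : Ω → ℝ, Measurable g → (∀ ω, 0 ≤ g ω) →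
      ∫⁻ ω, (Phi (g ω)).toENN ∂P < ⊤ →
      ∀ l : ℝ, 0 < l → ∫⁻ ω, (Phi (l * g ω)).toENN ∂P < ⊤)
    (DPhi : ℝ → ℝ)
    (hDPhi : ∀ y : ℝ, 0 < y → HasDerivAt (fun t : ℝ => (Phi t).toReal) (DPhi y) y)
    -- `η⁰, η¹ ∈ L_Φ`
    (eta0 eta1 : Ω → ℝ)
    (heta0_meas : Measurable eta0) (heta0_nonneg : ∀ ω, 0 ≤ eta0 ω)
    (heta0Phi : ∫⁻ ω, (Phi (eta0 ω)).toENN ∂P < ⊤)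
    (heta1_meas : Measurable eta1) (heta1_nonneg : ∀ ω, 0 ≤ eta1 ω)
    (heta1Phi : ∫⁻ ω, (Phi (eta1 ω)).toENN ∂P < ⊤) :
    -- `η¹·Φ'(η¹) ∈ L¹(P)`
    Integrable (fun ω => if eta1 ω = 0 then 0 else eta1 ω * DPhi (eta1 ω)) P ∧
    -- `(η⁰·Φ'(η¹))⁺ ∈ L¹(P)`
    Integrable (fun ω => if eta1 ω = 0 then 0 else max (eta0 ω * DPhi (eta1 ω)) 0) P ∧
    -- the left derivative at `x = 1` of `x ↦ E[Φ(η^x)]` equals `E[Φ'(η¹)·(η¹ - η⁰)]`,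
    -- an element of `(-∞, +∞]` (where `Φ'(η¹)·(η¹ - η⁰) = +∞` on `{η¹ = 0, η⁰ > 0}`
    -- since `Φ'(0⁺) = -∞`, and `:= 0` on `{η¹ = 0, η⁰ = 0}`)
    (ewp P (fun ω => if eta1 ω = 0 then (if eta0 ω = 0 then 0 else ⊤)
        else ((DPhi (eta1 ω) * (eta1 ω - eta0 ω) : ℝ) : EReal)) ≠ ⊥) ∧
    Tendsto
      (fun x : ℝ =>
        ((((ewp P (fun ω => Phi (eta1 ω))).toReal -
            (ewp P (fun ω => Phi (x * eta1 ω + (1 - x) * eta0 ω))).toReal) / (1 - x) : ℝ) :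
          EReal))
      (𝓝[<] (1 : ℝ))
      (𝓝 (ewp P (fun ω => if eta1 ω = 0 then (if eta0 ω = 0 then 0 else ⊤)
        else ((DPhi (eta1 ω) * (eta1 ω - eta0 ω) : ℝ) : EReal)))) := by
  classical
  have ha0 : a < ((0 : ℝ) : EReal) := by rwa [EReal.coe_zero]
  have hPhiTop : ∀ y : ℝ, 0 < y → Phi y ≠ ⊤ := fun y hy =>
    Phi_lt_top hu_ne_top hu_bot hu_fin hu_mono hdu hdu_pos hdu_anti hdu_inada_top
      hdu_inada_zero ha hPhi y hy
  set u0R : ℝ := (u 0).toReal with hu0R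
  have hu0 : u 0 = ((u0R : ℝ) : EReal) := (EReal.coe_toReal (hu_ne_top 0) (hu_fin 0 ha0)).symm
  have hPhi_ge : ∀ y : ℝ, ((u0R : ℝ) : EReal) ≤ Phi y := fun y => by
    rw [← hu0]; exact Phi_ge_u0 hPhi y
  -- measurability
  have hM1 : Measurable fun ω => Phi (eta1 ω) :=
    measurable_Phi_comp hu_ne_top hu_bot hu_fin hu_mono hdu hPhi heta1_meas heta1_nonneg
  have hM0 : Measurable fun ω => Phi (eta0 ω) :=
    measurable_Phi_comp hu_ne_top hu_bot hu_fin hu_mono hdu hPhi heta0_meas heta0_nonneg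
  have hMsum : Measurable fun ω => Phi (eta1 ω + eta0 ω) :=
    measurable_Phi_comp hu_ne_top hu_bot hu_fin hu_mono hdu hPhi (heta1_meas.add heta0_meas)
      (fun ω => add_nonneg (heta1_nonneg ω) (heta0_nonneg ω))
  have hMx : ∀ x : ℝ, 0 ≤ x → x ≤ 1 →
      Measurable fun ω => Phi (x * eta1 ω + (1 - x) * eta0 ω) := fun x hx0 hx1 =>
    measurable_Phi_comp hu_ne_top hu_bot hu_fin hu_mono hdu hPhi
      ((heta1_meas.const_mul x).add (heta0_meas.const_mul (1 - x)))
      (fun ω => add_nonneg (mul_nonneg hx0 (heta1_nonneg ω))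
        (mul_nonneg (by linarith) (heta0_nonneg ω)))
  -- integrability for eta1
  obtain ⟨hint1, hewp1⟩ := ewp_eq_integral_of_ge hM1 u0R (fun ω => hPhi_ge _) heta1Phi.ne
  -- mixtures have finite lintegral
  have hmixfin : ∀ x : ℝ, 0 ≤ x → x ≤ 1 →
      ∫⁻ ω, (Phi (x * eta1 ω + (1 - x) * eta0 ω)).toENN ∂P < ⊤ := by
    intro x hx0 hx1
    have hle : ∀ ω, (Phi (x * eta1 ω + (1 - x) * eta0 ω)).toENN
        ≤ (Phi (eta1 ω)).toENN + (Phi (eta0 ω)).toENN := fun ω =>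
      le_trans (EReal.toENN_mono
          (Phi_mid_le_max hu_ne_top ha hu_fin hPhi (eta1 ω) (eta0 ω) x hx0 hx1))
        (EReal.toENN_max_le _ _)
    calc ∫⁻ ω, (Phi (x * eta1 ω + (1 - x) * eta0 ω)).toENN ∂P
        ≤ ∫⁻ ω, ((Phi (eta1 ω)).toENN + (Phi (eta0 ω)).toENN) ∂P := lintegral_mono hle
      _ = (∫⁻ ω, (Phi (eta1 ω)).toENN ∂P) + ∫⁻ ω, (Phi (eta0 ω)).toENN ∂P :=
          lintegral_add_left (EReal.measurable_toENN.comp hM1) _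
      _ < ⊤ := ENNReal.add_lt_top.2 ⟨heta1Phi, heta0Phi⟩
  have hIx : ∀ x : ℝ, 0 ≤ x → x ≤ 1 →
      Integrable (fun ω => (Phi (x * eta1 ω + (1 - x) * eta0 ω)).toReal) P ∧
      ewp P (fun ω => Phi (x * eta1 ω + (1 - x) * eta0 ω))
        = ((∫ ω, (Phi (x * eta1 ω + (1 - x) * eta0 ω)).toReal ∂P : ℝ) : EReal) :=
    fun x hx0 hx1 => ewp_eq_integral_of_ge (hMx x hx0 hx1) u0R (fun ω => hPhi_ge _)
      (hmixfin x hx0 hx1).ne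
  -- scaled integrability via (A2)
  have hscaled : ∀ l : ℝ, 0 < l → Integrable (fun ω => (Phi (l * eta1 ω)).toReal) P := by
    intro l hl
    have hm : Measurable fun ω => Phi (l * eta1 ω) :=
      measurable_Phi_comp hu_ne_top hu_bot hu_fin hu_mono hdu hPhi (heta1_meas.const_mul l)
        (fun ω => mul_nonneg hl.le (heta1_nonneg ω))
    exact (ewp_eq_integral_of_ge hm u0R (fun ω => hPhi_ge _)
      (hA2 eta1 heta1_meas heta1_nonneg heta1Phi l hl).ne).1
  -- measurable version of DPhi
  set D' : ℝ → ℝ := deriv (fun t : ℝ => (Phi t).toReal) with hD'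
  have hD'eq : ∀ y : ℝ, 0 < y → D' y = DPhi y := fun y hy => (hDPhi y hy).deriv
  have hD'meas : Measurable D' := measurable_deriv _
  have hpos1 : ∀ ω, eta1 ω ≠ 0 → 0 < eta1 ω := fun ω h =>
    lt_of_le_of_ne (heta1_nonneg ω) (Ne.symm h)
  have hset1 : MeasurableSet {ω | eta1 ω = 0} := heta1_meas (measurableSet_singleton 0)
  have hset0 : MeasurableSet {ω | eta0 ω = 0} := heta0_meas (measurableSet_singleton 0)
  -- Part 1
  have hpart1 : Integrable (fun ω => if eta1 ω = 0 then 0 else eta1 ω * DPhi (eta1 ω)) P := by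
    have hfe : (fun ω => if eta1 ω = 0 then 0 else eta1 ω * DPhi (eta1 ω))
        = fun ω => if eta1 ω = 0 then 0 else eta1 ω * D' (eta1 ω) := by
      funext ω; by_cases h : eta1 ω = 0
      · simp [h]
      · simp only [if_neg h]; rw [hD'eq _ (hpos1 ω h)]
    have hmeasI : AEStronglyMeasurable
        (fun ω => if eta1 ω = 0 then 0 else eta1 ω * DPhi (eta1 ω)) P := by
      rw [hfe]
      exact (Measurable.ite hset1 measurable_const
        (heta1_meas.mul (hD'meas.comp heta1_meas))).aestronglyMeasurable
    have hdomint : Integrable (fun ω => |(Phi (2 * eta1 ω)).toReal|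
        + 3 * |(Phi (eta1 ω)).toReal| + 2 * |(Phi ((1/2 : ℝ) * eta1 ω)).toReal|) P :=
      ((hscaled 2 (by norm_num)).abs.add (hint1.abs.const_mul 3)).add
        ((hscaled (1/2) (by norm_num)).abs.const_mul 2)
    refine hdomint.mono' hmeasI (Eventually.of_forall fun ω => ?_)
    rw [Real.norm_eq_abs]
    by_cases h : eta1 ω = 0
    · rw [if_pos h, abs_zero]
      positivity
    · have hy : 0 < eta1 ω := hpos1 ω h
      rw [if_neg h]
      have hup : eta1 ω * DPhi (eta1 ω)
          ≤ (Phi (2 * eta1 ω)).toReal - (Phi (eta1 ω)).toReal := by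
        have hs := DPhi_le_slope hu_ne_top ha hu_fin hPhi hPhiTop hDPhi (eta1 ω) (2 * eta1 ω)
          hy (by linarith)
        have h2 : 2 * eta1 ω - eta1 ω = eta1 ω := by ring
        rw [h2, le_div_iff₀ hy] at hs
        nlinarith [hs]
      have hlow : 2 * ((Phi (eta1 ω)).toReal - (Phi ((1/2 : ℝ) * eta1 ω)).toReal)
          ≤ eta1 ω * DPhi (eta1 ω) := by
        have hs := slope_le_DPhi hu_ne_top ha hu_fin hPhi hPhiTop hDPhi ((1/2 : ℝ) * eta1 ω)
          (eta1 ω) (by linarith) hy (hPhiTop _ (by linarith))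
        have h2 : eta1 ω - (1/2 : ℝ) * eta1 ω = (1/2 : ℝ) * eta1 ω := by ring
        rw [h2, div_le_iff₀ (by linarith : (0:ℝ) < (1/2 : ℝ) * eta1 ω)] at hs
        nlinarith [hs]
      rw [abs_le]
      have k1 := le_abs_self ((Phi (eta1 ω)).toReal)
      have k2 := le_abs_self ((Phi (2 * eta1 ω)).toReal)
      have k3 := le_abs_self ((Phi ((1/2 : ℝ) * eta1 ω)).toReal)
      have k4 := neg_abs_le ((Phi (eta1 ω)).toReal)
      have k5 := neg_abs_le ((Phi (2 * eta1 ω)).toReal)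
      have k6 := neg_abs_le ((Phi ((1/2 : ℝ) * eta1 ω)).toReal)
      have k7 := abs_nonneg ((Phi (eta1 ω)).toReal)
      have k8 := abs_nonneg ((Phi (2 * eta1 ω)).toReal)
      have k9 := abs_nonneg ((Phi ((1/2 : ℝ) * eta1 ω)).toReal)
      constructor
      · linarith [hlow]
      · linarith [hup]
  -- Part 2
  have hsumfin : ∫⁻ ω, (Phi (eta1 ω + eta0 ω)).toENN ∂P < ⊤ := by
    have ghalf_meas : Measurable fun ω => (1/2 : ℝ) * (eta1 ω + eta0 ω) :=
      (heta1_meas.add heta0_meas).const_mul _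
    have ghalf_nonneg : ∀ ω, 0 ≤ (1/2 : ℝ) * (eta1 ω + eta0 ω) := fun ω =>
      mul_nonneg (by norm_num) (add_nonneg (heta1_nonneg ω) (heta0_nonneg ω))
    have hhalf_fin : ∫⁻ ω, (Phi ((1/2 : ℝ) * (eta1 ω + eta0 ω))).toENN ∂P < ⊤ := by
      have harg : ∀ ω, (1/2 : ℝ) * (eta1 ω + eta0 ω)
          = (1/2 : ℝ) * eta1 ω + (1 - 1/2 : ℝ) * eta0 ω := fun ω => by ring
      calc ∫⁻ ω, (Phi ((1/2 : ℝ) * (eta1 ω + eta0 ω))).toENN ∂P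
          = ∫⁻ ω, (Phi ((1/2 : ℝ) * eta1 ω + (1 - 1/2 : ℝ) * eta0 ω)).toENN ∂P :=
            lintegral_congr fun ω => by rw [harg ω]
        _ < ⊤ := hmixfin (1/2) (by norm_num) (by norm_num)
    have h2 := hA2 _ ghalf_meas ghalf_nonneg hhalf_fin 2 (by norm_num)
    calc ∫⁻ ω, (Phi (eta1 ω + eta0 ω)).toENN ∂P
        = ∫⁻ ω, (Phi (2 * ((1/2 : ℝ) * (eta1 ω + eta0 ω)))).toENN ∂P :=
          lintegral_congr fun ω => by
            rw [show (2 : ℝ) * ((1/2 : ℝ) * (eta1 ω + eta0 ω)) = eta1 ω + eta0 ω by ring]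
      _ < ⊤ := h2
  have hsumint : Integrable (fun ω => (Phi (eta1 ω + eta0 ω)).toReal) P :=
    (ewp_eq_integral_of_ge hMsum u0R (fun ω => hPhi_ge _) hsumfin.ne).1
  have hpart2 : Integrable
      (fun ω => if eta1 ω = 0 then 0 else max (eta0 ω * DPhi (eta1 ω)) 0) P := by
    have hfe : (fun ω => if eta1 ω = 0 then 0 else max (eta0 ω * DPhi (eta1 ω)) 0)
        = fun ω => if eta1 ω = 0 then 0 else max (eta0 ω * D' (eta1 ω)) 0 := by
      funext ω; by_cases h : eta1 ω = 0
      · simp [h]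
      · simp only [if_neg h]; rw [hD'eq _ (hpos1 ω h)]
    have hmeasI : AEStronglyMeasurable
        (fun ω => if eta1 ω = 0 then 0 else max (eta0 ω * DPhi (eta1 ω)) 0) P := by
      rw [hfe]
      exact (Measurable.ite hset1 measurable_const
        ((heta0_meas.mul (hD'meas.comp heta1_meas)).max measurable_const)).aestronglyMeasurable
    have hdomint : Integrable (fun ω => |(Phi (eta1 ω + eta0 ω)).toReal|
        + |(Phi (eta1 ω)).toReal|) P := hsumint.abs.add hint1.abs
    refine hdomint.mono' hmeasI (Eventually.of_forall fun ω => ?_)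
    rw [Real.norm_eq_abs]
    by_cases h : eta1 ω = 0
    · rw [if_pos h, abs_zero]
      positivity
    · have hy : 0 < eta1 ω := hpos1 ω h
      rw [if_neg h, abs_of_nonneg (le_max_right _ _)]
      refine max_le ?_ (by positivity)
      rcases eq_or_lt_of_le (heta0_nonneg ω) with h0 | h0
      · rw [← h0]
        simp only [zero_mul]
        positivity
      · have hs := DPhi_le_slope hu_ne_top ha hu_fin hPhi hPhiTop hDPhi (eta1 ω)
          (eta1 ω + eta0 ω) hy (by linarith)
        have h2 : eta1 ω + eta0 ω - eta1 ω = eta0 ω := by ring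
        rw [h2, le_div_iff₀ h0] at hs
        have h1 := le_abs_self ((Phi (eta1 ω + eta0 ω)).toReal)
        have h2' := neg_abs_le ((Phi (eta1 ω)).toReal)
        nlinarith [hs]
  -- Part 3
  set G : Ω → EReal := fun ω => if eta1 ω = 0 then (if eta0 ω = 0 then 0 else ⊤)
      else ((DPhi (eta1 ω) * (eta1 ω - eta0 ω) : ℝ) : EReal) with hGdef
  have hGmeas : Measurable G := by
    have hfe : G = fun ω => if eta1 ω = 0 then (if eta0 ω = 0 then (0 : EReal) else ⊤)
        else ((D' (eta1 ω) * (eta1 ω - eta0 ω) : ℝ) : EReal) := by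
      funext ω; rw [hGdef]
      by_cases h : eta1 ω = 0
      · simp [h]
      · simp only [if_neg h]; rw [hD'eq _ (hpos1 ω h)]
    rw [hfe]
    refine Measurable.ite hset1 (Measurable.ite hset0 measurable_const measurable_const) ?_
    exact measurable_coe_real_ereal.comp
      (((hD'meas.comp heta1_meas)).mul (heta1_meas.sub heta0_meas))
  -- a.e. finiteness
  have hE : ∀ᵐ ω ∂P, Phi (eta1 ω) ≠ ⊤ ∧ Phi (eta0 ω) ≠ ⊤ := by
    have h1 := ae_lt_top (EReal.measurable_toENN.comp hM1) heta1Phi.ne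
    have h0 := ae_lt_top (EReal.measurable_toENN.comp hM0) heta0Phi.ne
    filter_upwards [h1, h0] with ω hω1 hω0
    refine ⟨fun h => ?_, fun h => ?_⟩
    · rw [Function.comp_apply, h] at hω1
      simp at hω1
    · rw [Function.comp_apply, h] at hω0
      simp at hω0
  -- the difference quotients
  set q : ℝ → Ω → ℝ := fun x ω =>
    ((Phi (eta1 ω)).toReal - (Phi (x * eta1 ω + (1 - x) * eta0 ω)).toReal) / (1 - x) with hqdef
  have hqint : ∀ x : ℝ, 1/2 ≤ x → x < 1 → Integrable (q x) P := by
    intro x h1 h2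
    have := (hint1.sub (hIx x (by linarith) (by linarith)).1).div_const (1 - x)
    exact this
  have hqmono_ae : ∀ᵐ ω ∂P, ∀ x x' : ℝ, 1/2 ≤ x → x ≤ x' → x' < 1 → q x ω ≤ q x' ω := by
    filter_upwards [hE] with ω hω
    intro x x' h1 h2 h3
    exact q_mono hu_ne_top ha hu_fin hPhi hPhiTop (eta1 ω) (eta0 ω)
      (heta1_nonneg ω) (heta0_nonneg ω) hω.1 x x' h1 h2 h3
  have hqtend_ae : ∀ᵐ ω ∂P,
      Tendsto (fun x : ℝ => ((q x ω : ℝ) : EReal)) (𝓝[<] (1:ℝ)) (𝓝 (G ω)) := by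
    filter_upwards [hE] with ω hω
    have := q_tendsto hu_ne_top hu_bot hu_fin hu_mono hdu hdu_pos hdu_anti ha hPhi hPhiTop
      hDPhi (eta1 ω) (eta0 ω) (heta1_nonneg ω) (heta0_nonneg ω) hω.1
    simpa only [hGdef] using this
  have hintmono : ∀ x x' : ℝ, 1/2 ≤ x → x ≤ x' → x' < 1 →
      ∫ ω, q x ω ∂P ≤ ∫ ω, q x' ω ∂P := by
    intro x x' h1 h2 h3
    refine integral_mono_ae (hqint x h1 (lt_of_le_of_lt h2 h3)) (hqint x' (le_trans h1 h2) h3) ?_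
    filter_upwards [hqmono_ae] with ω hω using hω x x' h1 h2 h3
  -- the approximating sequence
  set xseq : ℕ → ℝ := fun n => 1 - 1 / ((n : ℝ) + 2) with hxseqdef
  have hxseq_mem : ∀ n : ℕ, 1/2 ≤ xseq n ∧ xseq n < 1 := by
    intro n
    have hpos : (0:ℝ) < (n : ℝ) + 2 := by positivity
    constructor
    · have h2 : (1:ℝ) / ((n : ℝ) + 2) ≤ 1/2 := by
        rw [div_le_div_iff₀ hpos (by norm_num)]
        have : (0:ℝ) ≤ (n : ℝ) := Nat.cast_nonneg n
        linarith
      simp only [hxseqdef]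
      linarith
    · have h2 : (0:ℝ) < 1 / ((n : ℝ) + 2) := by positivity
      simp only [hxseqdef]
      linarith
  have hxseq_mono : Monotone xseq := by
    intro m n hmn
    have hm : (0:ℝ) < (m : ℝ) + 2 := by positivity
    have hn : (0:ℝ) < (n : ℝ) + 2 := by positivity
    have hcast : (m : ℝ) ≤ (n : ℝ) := Nat.cast_le.2 hmn
    simp only [hxseqdef]
    have : (1:ℝ) / ((n : ℝ) + 2) ≤ 1 / ((m : ℝ) + 2) := by
      rw [div_le_div_iff₀ hn hm]
      linarith
    linarith
  have hxseq_tend : Tendsto xseq atTop (𝓝[<] (1:ℝ)) := by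
    rw [tendsto_nhdsWithin_iff]
    constructor
    · have h1 : Tendsto (fun n : ℕ => (n : ℝ) + 2) atTop atTop :=
        tendsto_atTop_add_const_right _ 2 tendsto_natCast_atTop_atTop
      have h0 : Tendsto (fun n : ℕ => 1 / ((n : ℝ) + 2)) atTop (𝓝 0) := by
        simpa only [one_div, Pi.inv_def] using h1.inv_tendsto_atTop
      have h2 := h0.const_sub (1:ℝ)
      rw [sub_zero] at h2
      exact h2
    · exact Eventually.of_forall fun n => (hxseq_mem n).2
  set fseq : ℕ → Ω → ℝ := fun n => q (xseq n) with hfseqdef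
  have hfint : ∀ n, Integrable (fseq n) P := fun n => hqint _ (hxseq_mem n).1 (hxseq_mem n).2
  have hfmono : ∀ᵐ ω ∂P, Monotone fun n => fseq n ω := by
    filter_upwards [hqmono_ae] with ω hω
    intro m n hmn
    exact hω (xseq m) (xseq n) (hxseq_mem m).1 (hxseq_mono hmn) (hxseq_mem n).2
  have hflim : ∀ᵐ ω ∂P, Tendsto (fun n => ((fseq n ω : ℝ) : EReal)) atTop (𝓝 (G ω)) := by
    filter_upwards [hqtend_ae] with ω hω
    exact hω.comp hxseq_tend
  have hMCT := ereal_MCT hfint hfmono hGmeas hflim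
  have hmono_int_seq : Monotone fun n => ∫ ω, fseq n ω ∂P := fun m n hmn =>
    hintmono _ _ (hxseq_mem m).1 (hxseq_mono hmn) (hxseq_mem n).2
  have hseq_le : ∀ n, ((∫ ω, fseq n ω ∂P : ℝ) : EReal) ≤ ewp P G := by
    intro n
    refine ge_of_tendsto hMCT ?_
    filter_upwards [eventually_ge_atTop n] with m hm
    exact EReal.coe_le_coe_iff.2 (hmono_int_seq hm)
  have h3a : ewp P G ≠ ⊥ := by
    intro h
    have := hseq_le 0
    rw [h, le_bot_iff] at this
    exact EReal.coe_ne_bot _ this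
  -- the monotone function on (−∞, 1)
  set M : ℝ → EReal := fun x => ((∫ ω, q (max x (1/2)) ω ∂P : ℝ) : EReal) with hMdef
  have hc_mem : ∀ x : ℝ, x < 1 → 1/2 ≤ max x (1/2) ∧ max x (1/2) < 1 := fun x hx =>
    ⟨le_max_right _ _, max_lt hx (by norm_num)⟩
  have hMmono : MonotoneOn M (Iio (1:ℝ)) := by
    intro x hx x' hx' hxx'
    refine EReal.coe_le_coe_iff.2 ?_
    exact hintmono _ _ (hc_mem x hx).1 (max_le_max hxx' le_rfl) (hc_mem x' hx').2
  have htendM : Tendsto M (𝓝[<] (1:ℝ)) (𝓝 (sSup (M '' Iio 1))) :=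
    hMmono.tendsto_nhdsLT (OrderTop.bddAbove _)
  have htend1 : Tendsto xseq atTop (𝓝 (1:ℝ)) :=
    hxseq_tend.mono_right nhdsWithin_le_nhds
  have hsup : sSup (M '' Iio (1:ℝ)) = ewp P G := by
    refine le_antisymm ?_ ?_
    · refine sSup_le ?_
      rintro v ⟨x, hx, rfl⟩
      have hxlt : x < 1 := hx
      obtain ⟨n, hn⟩ : ∃ n : ℕ, max x (1/2) ≤ xseq n := by
        have := (htend1.eventually (eventually_gt_nhds (hc_mem x hxlt).2)).exists
        obtain ⟨n, hn⟩ := this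
        exact ⟨n, hn.le⟩
      have h1 : ∫ ω, q (max x (1/2)) ω ∂P ≤ ∫ ω, fseq n ω ∂P :=
        hintmono _ _ (hc_mem x hxlt).1 hn (hxseq_mem n).2
      exact le_trans (EReal.coe_le_coe_iff.2 h1) (hseq_le n)
    · refine le_of_tendsto hMCT (Eventually.of_forall fun n => ?_)
      have hxn : M (xseq n) = ((∫ ω, fseq n ω ∂P : ℝ) : EReal) := by
        simp only [hMdef, hfseqdef, max_eq_left (hxseq_mem n).1]
      rw [← hxn]
      exact le_sSup ⟨xseq n, (hxseq_mem n).2, rfl⟩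
  refine ⟨hpart1, hpart2, h3a, ?_⟩
  rw [← hsup]
  refine Tendsto.congr' ?_ htendM
  filter_upwards [Ioo_mem_nhdsLT (show (1:ℝ)/2 < 1 by norm_num)] with x hx
  have hx2 : 1/2 ≤ x := hx.1.le
  have hx1 : x < 1 := hx.2
  simp only [hMdef, max_eq_left hx2]
  rw [hewp1, EReal.toReal_coe, (hIx x (by linarith) hx1.le).2, EReal.toReal_coe]
  refine congrArg Real.toEReal ?_
  simp only [hqdef]
  rw [integral_div, integral_sub hint1 (hIx x (by linarith) hx1.le).1]

end
end
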